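/- arXiv:2306.05933 — 3 statements merged into one kernel-verified Lean document; each statement's English description precedes it below -/
import Mathlib

section
/- Let ≺ be a reflection order on Φ⁺, write Φ⁺ = {β₁ ≺ β₂ ≺ ⋯ ≺ β_N}, and let 1 ≤ a ≤ b ≤ N. Then both of the following subsets of Φ are closed under root addition (i.e., whenever α and β lie in the subset and α + β ∈ Φ, also α + β lies in the subset): (i) the interval {β_a, β_{a+1}, …, β_b}; (ii) the set {β_{b+1}, …, β_N} ∪ {−β₁, −β₂, …, −β_{a−1}}. -/
noncomputable section

open Module

variable {V : Type} [AddCommGroup V] [Module ℝ V] [DecidableEq V]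

/-- A finite crystallographic root system in `V`, together with a choice of positive roots. -/
structure RootSystemData (V : Type) [AddCommGroup V] [Module ℝ V] where
  /-- the (finite) set of roots -/
  Φ : Finset V
  /-- the set of positive roots -/
  pos : Finset V
  /-- the coroot `α∨`, viewed as a linear functional on `V` (only its values on `Φ` matter) -/
  coroot : V → Module.Dual ℝ V
  /-- the integer-valued pairing `⟨α∨, β⟩` (crystallographic condition) -/
  pairing : V → V → ℤ
  /-- the reflection `s_α` (only its values for `α ∈ Φ` matter) -/
  s : V → V ≃ₗ[ℝ] V
  span_eq : Submodule.span ℝ (Φ : Set V) = ⊤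
  ne_zero : ∀ α ∈ Φ, α ≠ (0 : V)
  neg_mem : ∀ α ∈ Φ, -α ∈ Φ
  coroot_self : ∀ α ∈ Φ, coroot α α = 2
  pairing_eq : ∀ α ∈ Φ, ∀ β ∈ Φ, (pairing α β : ℝ) = coroot α β
  s_apply : ∀ α ∈ Φ, ∀ v : V, s α v = v - coroot α v • α
  s_root_mem : ∀ α ∈ Φ, ∀ β ∈ Φ, s α β ∈ Φ
  pos_subset : pos ⊆ Φ
  mem_pos_or : ∀ α ∈ Φ, α ∈ pos ∨ -α ∈ pos
  pos_not_neg : ∀ α ∈ pos, -α ∉ pos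
  pos_add_mem : ∀ α ∈ pos, ∀ β ∈ pos, α + β ∈ Φ → α + β ∈ pos

namespace RootSystemData

variable (R : RootSystemData V)

/-- The Weyl group `W`, realized as a subgroup of the linear automorphisms of `V`,
generated by the reflections in the roots. -/
def Wgrp : Subgroup (V ≃ₗ[ℝ] V) := Subgroup.closure ((fun α => R.s α) '' (R.Φ : Set V))

/-- The length function `ℓ(w) = #{α ∈ Φ⁺ : w α ∈ Φ⁻}`. -/
def len (w : V ≃ₗ[ℝ] V) : ℕ := (R.pos.filter fun α => -(w α) ∈ R.pos).card

/-- `⟨α∨, 2ρ⟩ = Σ_{β ∈ Φ⁺} ⟨α∨, β⟩` (an integer). -/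
def pairSum (α : V) : ℤ := ∑ β ∈ R.pos, R.pairing α β

/-- The affine reflection `r_b` (for `b = (γ, ν) ∈ Φ_af`) applied to an affine root `c = (α, k)`:
`r_b (α, k) = (s_γ α, k − ν ⟨γ∨, α⟩)`. -/
def afRefl (b c : V × ℤ) : V × ℤ := (R.s b.1 c.1, c.2 - b.2 * R.pairing b.1 c.1)

/-- Positivity of an affine root `(α, n)`: either `α ∈ Φ⁺` and `n ≥ 0`, or `α ∈ Φ⁻` and `n ≥ 1`. -/
def AfPos (c : V × ℤ) : Prop := (c.1 ∈ R.pos ∧ 0 ≤ c.2) ∨ (-c.1 ∈ R.pos ∧ 1 ≤ c.2)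

/-- The affine reflection `r_b = s_γ t^{ν γ∨}` (for `b = (γ, ν)`), as an element of the
affine Weyl group realized as pairs `(w, μ) ∈ W × (coweights)` representing `w t^μ`. -/
def rE (b : V × ℤ) : (V ≃ₗ[ℝ] V) × Module.Dual ℝ V := (R.s b.1, (b.2 : ℝ) • R.coroot b.1)

end RootSystemData

/-- Multiplication in the affine Weyl group `W̃ = W ⋉ Λ`, where `(w, μ)` represents `w t^μ`:
`(w t^μ)(w' t^{μ'}) = (w w') t^{w'⁻¹ μ + μ'}`, and the contragredient action on coweights is
`w'⁻¹ • μ = μ ∘ w'`. -/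
def amul (x y : (V ≃ₗ[ℝ] V) × Module.Dual ℝ V) : (V ≃ₗ[ℝ] V) × Module.Dual ℝ V :=
  (x.1 * y.1, x.2 ∘ₗ y.1.toLinearMap + y.2)

/-- The ordered product `x₁ x₂ ⋯ x_k` in the affine Weyl group. -/
def aprod (l : List ((V ≃ₗ[ℝ] V) × Module.Dual ℝ V)) : (V ≃ₗ[ℝ] V) × Module.Dual ℝ V :=
  l.foldr amul (1, 0)

namespace RootSystemData

variable (R : RootSystemData V)

/-- Given affine roots `b 0, …, b (K-1)`, this is `r_{b_{K-1}} ⋯ r_{b_{h+1}} r_{b_h} (b h)`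
(apply the reflections with indices `≥ h` in ascending order of application). -/
def twist {K : ℕ} (b : Fin K → V × ℤ) (h : Fin K) : V × ℤ :=
  (((List.finRange K).filter fun j => h ≤ j).foldl (fun c j => R.afRefl (b j) c) (b h))

/-- Given affine roots `b 0, …, b (K-1)`, this is `r_{b_{K-1}} ⋯ r_{b_{h+1}} (b h)`
(apply the reflections with indices `> h` in ascending order of application). -/
def twistStrict {K : ℕ} (b : Fin K → V × ℤ) (h : Fin K) : V × ℤ :=
  (((List.finRange K).filter fun j => h < j).foldl (fun c j => R.afRefl (b j) c) (b h))

end RootSystemData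

/-- A reflection order on `Φ⁺`, given by an enumeration `β 0 ≺ β 1 ≺ ⋯ ≺ β (N-1)` of the
positive roots such that whenever `β i + β j = β k` one has `i < k < j` or `j < k < i`. -/
structure ReflectionOrder (R : RootSystemData V) (N : ℕ) where
  β : Fin N → V
  inj : Function.Injective β
  range_eq : Set.range β = (R.pos : Set V)
  order3 : ∀ i j k : Fin N, β i + β j = β k → (i < k ∧ k < j) ∨ (j < k ∧ k < i)

/-- An increasing labelled path in the double Bruhat graph `DBG(W)` from `u` to `v`:
a sequence of edges `u = u₁ → u₂ → ⋯ → u_{ℓ+1} = v`, whose labels are positive roots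
`lab (ix 1), …, lab (ix ℓ)` with `ix` strictly monotone (so the path is increasing for the
order given by the enumeration `lab`) and all indices lying in the allowed set `S`;
the edge from `u_i` carries an integer `m i ≥ 0`, with `m i ≥ 1` if `u_i (α_i) ∈ Φ⁻`. -/
structure IncPath (R : RootSystemData V) {N : ℕ} (lab : Fin N → V) (S : Set (Fin N))
    (u v : V ≃ₗ[ℝ] V) where
  len : ℕ
  ix : Fin len → Fin N
  mono : StrictMono ix
  mem_S : ∀ i, ix i ∈ S
  m : Fin len → ℤ
  vert : Fin (len + 1) → V ≃ₗ[ℝ] V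
  vert_zero : vert 0 = u
  vert_last : vert (Fin.last len) = v
  lab_mem : ∀ i : Fin len, lab (ix i) ∈ R.pos
  step : ∀ i : Fin len, vert i.succ = vert i.castSucc * R.s (lab (ix i))
  m_lb : ∀ i : Fin len, (if vert i.castSucc (lab (ix i)) ∈ R.pos then (0 : ℤ) else 1) ≤ m i

/-- The weight `wt(p) = m₁ α₁∨ + ⋯ + m_ℓ α_ℓ∨` of a path, as a coweight. -/
def IncPath.wt {R : RootSystemData V} {N : ℕ} {lab : Fin N → V} {S : Set (Fin N)}
    {u v : V ≃ₗ[ℝ] V} (p : IncPath R lab S u v) : Module.Dual ℝ V :=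
  ∑ i : Fin p.len, (p.m i : ℝ) • R.coroot (lab (p.ix i))

/-- A path in the quantum Bruhat graph `QBG(W)` from `u` to `v`: every edge is either an
edge `w →^{(α,0)} w s_α` with `ℓ(w s_α) = ℓ(w) + 1`, or an edge `w →^{(α,1)} w s_α` with
`ℓ(w s_α) = ℓ(w) + 1 − ⟨α∨, 2ρ⟩`. -/
structure QPath (R : RootSystemData V) (u v : V ≃ₗ[ℝ] V) where
  len : ℕ
  lab : Fin len → V
  lab_mem : ∀ i, lab i ∈ R.pos
  m : Fin len → ℤ
  vert : Fin (len + 1) → V ≃ₗ[ℝ] V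
  vert_zero : vert 0 = u
  vert_last : vert (Fin.last len) = v
  step : ∀ i : Fin len, vert i.succ = vert i.castSucc * R.s (lab i)
  edge : ∀ i : Fin len,
    (m i = 0 ∧ R.len (vert i.succ) = R.len (vert i.castSucc) + 1) ∨
    (m i = 1 ∧ (R.len (vert i.succ) : ℤ) = (R.len (vert i.castSucc) : ℤ) + 1 - R.pairSum (lab i))

/-- The weight of a path in the quantum Bruhat graph. -/
def QPath.wt {R : RootSystemData V} {u v : V ≃ₗ[ℝ] V} (q : QPath R u v) : Module.Dual ℝ V :=
  ∑ i : Fin q.len, (q.m i : ℝ) • R.coroot (q.lab i)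

/-- A simple root: a positive root that is not the sum of two positive roots. -/
def IsSimpleRoot (R : RootSystemData V) (α : V) : Prop :=
  α ∈ R.pos ∧ ¬ ∃ β ∈ R.pos, ∃ γ ∈ R.pos, α = β + γ

/-- `l` is a reduced word for `w`: a list of simple roots whose reflections multiply to `w`,
of length `ℓ(w)`. -/
def IsReducedWord (R : RootSystemData V) (l : List V) (w : V ≃ₗ[ℝ] V) : Prop :=
  (∀ a ∈ l, IsSimpleRoot R a) ∧ (l.map R.s).prod = w ∧ l.length = R.len w

/-- Bruhat order: `x ≤ y` iff some reduced word for `y` contains a subword which is a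
reduced word for `x`. -/
def BruhatLE (R : RootSystemData V) (x y : V ≃ₗ[ℝ] V) : Prop :=
  ∃ ly : List V, IsReducedWord R ly y ∧ ∃ lx : List V, lx.Sublist ly ∧ IsReducedWord R lx x

/-- An admissible type for `(x, u, ≺)`, bounded by `n`: indices `n₁ < ⋯ < n_K ≤ n` and
integers `ν₁, …, ν_K` such that, with `b_h = (u β_{n_h}, ν_h)`, each
`r_{b_K} ⋯ r_{b_{h+1}} (b_h)` is a negative affine root and `r_{b₁} ⋯ r_{b_K} = x` in `W̃`. -/
structure AdmissibleType (R : RootSystemData V) {N : ℕ} (RO : ReflectionOrder R N) (n : ℕ)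
    (u : V ≃ₗ[ℝ] V) (x : (V ≃ₗ[ℝ] V) × Module.Dual ℝ V) where
  K : ℕ
  idx : Fin K → Fin N
  mono : StrictMono idx
  bounded : ∀ h, (idx h : ℕ) < n
  ν : Fin K → ℤ
  neg_cond : ∀ h : Fin K, ¬ R.AfPos (R.twistStrict (fun j => (u (RO.β (idx j)), ν j)) h)
  prod_eq : aprod (List.ofFn fun h : Fin K => R.rE (u (RO.β (idx h)), ν h)) = x


/-- for a reflection order `β₁ ≺ ⋯ ≺ β_N` and `1 ≤ a ≤ b ≤ N`, both the interval
`{β_a, …, β_b}` and the set `{β_{b+1}, …, β_N} ∪ {−β₁, …, −β_{a−1}}` are closed under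
root addition. (Indices are 0-based here: `a ≤ i ≤ b`, resp. `i > b` and `i < a`.) -/
theorem statement0 (R : RootSystemData V) {N : ℕ} (RO : ReflectionOrder R N)
    (a b : Fin N) (hab : a ≤ b) :
    (∀ x ∈ RO.β '' {i : Fin N | a ≤ i ∧ i ≤ b}, ∀ y ∈ RO.β '' {i : Fin N | a ≤ i ∧ i ≤ b},
        x + y ∈ (R.Φ : Set V) → x + y ∈ RO.β '' {i : Fin N | a ≤ i ∧ i ≤ b})
    ∧ (∀ x ∈ RO.β '' {i : Fin N | b < i} ∪ (fun i => -RO.β i) '' {i : Fin N | i < a},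
        ∀ y ∈ RO.β '' {i : Fin N | b < i} ∪ (fun i => -RO.β i) '' {i : Fin N | i < a},
          x + y ∈ (R.Φ : Set V) →
            x + y ∈ RO.β '' {i : Fin N | b < i} ∪ (fun i => -RO.β i) '' {i : Fin N | i < a}) := by
  have hβpos : ∀ i : Fin N, RO.β i ∈ R.pos := fun i => by
    have h : RO.β i ∈ Set.range RO.β := ⟨i, rfl⟩
    rwa [RO.range_eq] at h
  have hsurj : ∀ v ∈ R.pos, ∃ k : Fin N, RO.β k = v := fun v hv => by
    have h : v ∈ Set.range RO.β := by rw [RO.range_eq]; exact hv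
    exact h
  constructor
  · rintro x ⟨i, ⟨hai, hib⟩, rfl⟩ y ⟨j, ⟨haj, hjb⟩, rfl⟩ hΦ
    have hpos : RO.β i + RO.β j ∈ R.pos :=
      R.pos_add_mem _ (hβpos i) _ (hβpos j) (by exact_mod_cast hΦ)
    obtain ⟨k, hk⟩ := hsurj _ hpos
    rcases RO.order3 i j k hk.symm with ⟨h1, h2⟩ | ⟨h1, h2⟩
    · exact ⟨k, ⟨le_trans hai h1.le, le_trans h2.le hjb⟩, hk⟩
    · exact ⟨k, ⟨le_trans haj h1.le, le_trans h2.le hib⟩, hk⟩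
  · have hΦmem : ∀ i : Fin N, RO.β i ∈ R.Φ := fun i => R.pos_subset (hβpos i)
    rintro x (⟨i, hi, rfl⟩ | ⟨i, hi, rfl⟩) y (⟨j, hj, rfl⟩ | ⟨j, hj, rfl⟩) hΦ
    · -- both positive, i, j > b
      have hpos : RO.β i + RO.β j ∈ R.pos :=
        R.pos_add_mem _ (hβpos i) _ (hβpos j) (by exact_mod_cast hΦ)
      obtain ⟨k, hk⟩ := hsurj _ hpos
      rcases RO.order3 i j k hk.symm with ⟨h1, _⟩ | ⟨h1, _⟩
      · exact Or.inl ⟨k, lt_trans hi h1, hk⟩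
      · exact Or.inl ⟨k, lt_trans hj h1, hk⟩
    · -- x = β i (b < i), y = -β j (j < a)
      have hji : j < i := lt_trans (lt_of_lt_of_le hj hab) hi
      have hΦ' : RO.β i + -RO.β j ∈ R.Φ := by exact_mod_cast hΦ
      rcases R.mem_pos_or _ hΦ' with hp | hp
      · obtain ⟨k, hk⟩ := hsurj _ hp
        have heq : RO.β k + RO.β j = RO.β i := by rw [hk]; abel
        rcases RO.order3 k j i heq with ⟨_, h2⟩ | ⟨h1, h2⟩
        · exact absurd h2 (not_lt.mpr hji.le)
        · exact Or.inl ⟨k, lt_trans hi h2, hk⟩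
      · have hp' : -(RO.β i + -RO.β j) ∈ R.pos := hp
        obtain ⟨k, hk⟩ := hsurj _ hp'
        have heq : RO.β k + RO.β i = RO.β j := by rw [hk]; abel
        rcases RO.order3 k i j heq with ⟨h1, _⟩ | ⟨h2, _⟩
        · exact Or.inr ⟨k, lt_trans h1 hj, show -RO.β k = _ by rw [hk]; abel⟩
        · exact absurd h2 hji.asymm
    · -- x = -β i (i < a), y = β j (b < j)
      have hij : i < j := lt_trans (lt_of_lt_of_le hi hab) hj
      have hΦ' : -RO.β i + RO.β j ∈ R.Φ := by exact_mod_cast hΦ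
      rcases R.mem_pos_or _ hΦ' with hp | hp
      · obtain ⟨k, hk⟩ := hsurj _ hp
        have heq : RO.β k + RO.β i = RO.β j := by rw [hk]; abel
        rcases RO.order3 k i j heq with ⟨_, h2⟩ | ⟨h1, h2⟩
        · exact absurd h2 (not_lt.mpr hij.le)
        · exact Or.inl ⟨k, lt_trans hj h2, hk⟩
      · have hp' : -(-RO.β i + RO.β j) ∈ R.pos := hp
        obtain ⟨k, hk⟩ := hsurj _ hp'
        have heq : RO.β k + RO.β j = RO.β i := by rw [hk]; abel
        rcases RO.order3 k j i heq with ⟨h1, _⟩ | ⟨h2, _⟩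
        · exact Or.inr ⟨k, lt_trans h1 hi, show -RO.β k = -RO.β i + RO.β j by rw [hk]; abel⟩
        · exact absurd h2 hij.asymm
    · -- both negative
      have hΦ' : -RO.β i + -RO.β j ∈ R.Φ := by exact_mod_cast hΦ
      have hΦ'' : RO.β i + RO.β j ∈ R.Φ := by
        have := R.neg_mem _ hΦ'
        rwa [show -(-RO.β i + -RO.β j) = RO.β i + RO.β j by abel] at this
      have hpos : RO.β i + RO.β j ∈ R.pos := R.pos_add_mem _ (hβpos i) _ (hβpos j) hΦ''
      obtain ⟨k, hk⟩ := hsurj _ hpos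
      rcases RO.order3 i j k hk.symm with ⟨_, h2⟩ | ⟨_, h2⟩
      · exact Or.inr ⟨k, lt_trans h2 hj, show -RO.β k = _ by rw [hk]; abel⟩
      · exact Or.inr ⟨k, lt_trans h2 hi, show -RO.β k = _ by rw [hk]; abel⟩

end
end

section
/- Let ≺ be a reflection order on Φ⁺, write Φ⁺ = {β₁ ≺ ⋯ ≺ β_N}, let 0 ≤ n ≤ N, and set u = s_{β_{n+1}} s_{β_{n+2}} ⋯ s_{β_N} ∈ W. Then {β ∈ Φ⁺ : u⁻¹β ∈ Φ⁻} = {β_{n+1}, …, β_N}. -/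
noncomputable section

open Module

variable {V : Type} [AddCommGroup V] [Module ℝ V] [DecidableEq V]

namespace S1Aux

variable (R : RootSystemData V)

lemma s_self {α : V} (hα : α ∈ R.Φ) : R.s α α = -α := by
  rw [R.s_apply α hα, R.coroot_self α hα]
  module

lemma s_s {α : V} (hα : α ∈ R.Φ) (v : V) : R.s α (R.s α v) = v := by
  have hc : R.coroot α (v - R.coroot α v • α) = - R.coroot α v := by
    simp [map_sub, map_smul, R.coroot_self α hα]; ring
  rw [R.s_apply α hα v, R.s_apply α hα, hc]
  module

lemma s_mul_self {α : V} (hα : α ∈ R.Φ) : R.s α * R.s α = 1 := by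
  ext v; exact s_s R hα v

lemma s_inv {α : V} (hα : α ∈ R.Φ) : (R.s α)⁻¹ = R.s α :=
  inv_eq_of_mul_eq_one_left (s_mul_self R hα)

variable {N : ℕ}

lemma idx_exists (RO : ReflectionOrder R N) {x : V} (hx : x ∈ R.pos) : ∃ i, RO.β i = x := by
  have : x ∈ Set.range RO.β := by rw [RO.range_eq]; exact hx
  exact this

lemma beta_pos (RO : ReflectionOrder R N) (i : Fin N) : RO.β i ∈ R.pos := by
  have : RO.β i ∈ Set.range RO.β := ⟨i, rfl⟩
  rw [RO.range_eq] at this; exact this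

lemma beta_root (RO : ReflectionOrder R N) (i : Fin N) : RO.β i ∈ R.Φ :=
  R.pos_subset (beta_pos R RO i)

lemma not_double (RO : ReflectionOrder R N) {α : V} (hα : α ∈ R.Φ) : (2:ℝ) • α ∉ R.Φ := by
  intro h2
  have key : ∀ x, x ∈ R.pos → (2:ℝ) • x ∉ R.pos := by
    intro x hx hx2
    obtain ⟨i, hi⟩ := idx_exists R RO hx
    obtain ⟨k, hk⟩ := idx_exists R RO hx2
    have hsum : RO.β i + RO.β i = RO.β k := by rw [hi, hk]; module
    rcases RO.order3 i i k hsum with ⟨h1', h2'⟩ | ⟨h1', h2'⟩ <;> exact absurd h2' (not_lt.2 h1'.le)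
  rcases R.mem_pos_or α hα with h | h <;> rcases R.mem_pos_or _ h2 with g | g
  · exact key α h g
  · have hsum : α + -((2:ℝ)•α) = -α := by module
    have hmem : α + -((2:ℝ)•α) ∈ R.Φ := by rw [hsum]; exact R.neg_mem α hα
    have := R.pos_add_mem α h _ g hmem
    rw [hsum] at this; exact R.pos_not_neg α h this
  · have hsum : -α + (2:ℝ)•α = α := by module
    have hmem : -α + (2:ℝ)•α ∈ R.Φ := by rw [hsum]; exact hα
    have := R.pos_add_mem _ h _ g hmem
    rw [hsum] at this
    exact R.pos_not_neg _ h (by simpa using this)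
  · have : (2:ℝ) • (-α) ∈ R.pos := by
      have he : (2:ℝ) • (-α) = -((2:ℝ)•α) := by module
      rw [he]; exact g
    exact key _ h this

set_option linter.unusedSectionVars false in
lemma pairing_eq_of_coroot {x y : V} (hx : x ∈ R.Φ) (hy : y ∈ R.Φ) (m : ℤ)
    (h : R.coroot x y = (m:ℝ)) : R.pairing x y = m := by
  have := R.pairing_eq x hx y hy
  rw [h] at this; exact_mod_cast this

set_option linter.unusedSectionVars false in
lemma coroot_eq_pairing {x y : V} (hx : x ∈ R.Φ) (hy : y ∈ R.Φ) :
    R.coroot x y = (R.pairing x y : ℝ) := (R.pairing_eq x hx y hy).symm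

set_option linter.unusedSectionVars false in
lemma pairing_neg_right {x y : V} (hx : x ∈ R.Φ) (hy : y ∈ R.Φ) :
    R.pairing x (-y) = - R.pairing x y := by
  apply pairing_eq_of_coroot R hx (R.neg_mem y hy)
  rw [map_neg, coroot_eq_pairing R hx hy]; push_cast; ring

set_option linter.unusedSectionVars false in
lemma pairing_sub_self {x y : V} (hx : x ∈ R.Φ) (hy : y ∈ R.Φ) (hxy : y - x ∈ R.Φ) :
    R.pairing x (y - x) = R.pairing x y - 2 := by
  apply pairing_eq_of_coroot R hx hxy
  rw [map_sub, coroot_eq_pairing R hx hy, R.coroot_self x hx]; push_cast; ring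

set_option linter.unusedSectionVars false in
lemma pairing_add_self {x y : V} (hx : x ∈ R.Φ) (hy : y ∈ R.Φ) (hxy : y + x ∈ R.Φ) :
    R.pairing x (y + x) = R.pairing x y + 2 := by
  apply pairing_eq_of_coroot R hx hxy
  rw [map_add, coroot_eq_pairing R hx hy, R.coroot_self x hx]; push_cast; ring

set_option linter.unusedSectionVars false in
lemma not_prop (RO : ReflectionOrder R N) {α γ : V} (hα : α ∈ R.Φ) (hγ : γ ∈ R.Φ)
    (h1 : γ ≠ α) (h2 : γ ≠ -α) (c : ℝ) : γ ≠ c • α := by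
  intro hc
  have hα0 := R.ne_zero α hα
  have hc0 : c ≠ 0 := by
    rintro rfl; exact R.ne_zero γ hγ (by simp [hc])
  have hp : (R.pairing α γ : ℝ) = 2*c := by
    rw [R.pairing_eq α hα γ hγ, hc, map_smul, R.coroot_self α hα]
    simp [mul_comm]
  have hq : (R.pairing γ α : ℝ) * c = 2 := by
    have h2' := R.coroot_self γ hγ
    nth_rewrite 2 [hc] at h2'
    rw [map_smul] at h2'
    rw [R.pairing_eq γ hγ α hα]
    simpa [mul_comm] using h2'
  have hpq : (R.pairing α γ) * (R.pairing γ α) = 4 := by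
    have : ((R.pairing α γ : ℝ)) * (R.pairing γ α : ℝ) = 4 := by
      rw [hp]; nlinarith [hq]
    exact_mod_cast this
  set p := R.pairing α γ with hpd
  set q := R.pairing γ α with hqd
  have hq0 : q ≠ 0 := by rintro h; rw [h] at hpq; omega
  have hq1 : 1 ≤ |q| := Int.one_le_abs hq0
  have habs : |p| * |q| = 4 := by rw [← abs_mul, hpq]; norm_num
  have hb1 : -4 ≤ p := by nlinarith [abs_nonneg p, abs_nonneg q, neg_abs_le p]
  have hb2 : p ≤ 4 := by nlinarith [abs_nonneg p, abs_nonneg q, le_abs_self p]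
  interval_cases p
  · -- p = -4, c = -2
    have hcv : c = -2 := by push_cast at hp; linarith
    apply not_double R RO hα
    have he : (2:ℝ) • α = -γ := by rw [hc, hcv]; module
    rw [he]; exact R.neg_mem γ hγ
  · omega
  · -- p = -2, c = -1
    have hcv : c = -1 := by push_cast at hp; linarith
    apply h2; rw [hc, hcv]; module
  · -- p = -1, c = -1/2
    have hcv : c = -(1/2) := by push_cast at hp; linarith
    apply not_double R RO hγ
    have he : (2:ℝ) • γ = -α := by rw [hc, hcv]; module
    rw [he]; exact R.neg_mem α hα
  · omega
  · -- p = 1, c = 1/2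
    have hcv : c = 1/2 := by push_cast at hp; linarith
    apply not_double R RO hγ
    have he : (2:ℝ) • γ = α := by rw [hc, hcv]; module
    rw [he]; exact hα
  · -- p = 2, c = 1
    have hcv : c = 1 := by push_cast at hp; linarith
    apply h1; rw [hc, hcv]; module
  · omega
  · -- p = 4, c = 2
    have hcv : c = 2 := by push_cast at hp; linarith
    apply not_double R RO hα
    have he : (2:ℝ) • α = γ := by rw [hc, hcv]
    rw [he]; exact hγ

lemma mono_seq (S : ℤ) (hS : 2 ≤ S) (E : ℕ → ℤ) (h0 : E 0 = 0) (h1 : 1 ≤ E 1)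
    (hrec : ∀ n, E (n+2) = S * E (n+1) - E n) : StrictMono E := by
  have key : ∀ n, E n < E (n+1) ∧ 0 ≤ E n := by
    intro n; induction n with
    | zero =>
      constructor
      · show E 0 < E 1; omega
      · omega
    | succ k ih =>
      have h2 := hrec k
      have h3 : 0 ≤ E (k+1) := by omega
      have h4 : E (k+1) ≤ (S-1) * E (k+1) :=
        le_mul_of_one_le_left h3 (by omega)
      constructor
      · nlinarith
      · omega
  exact strictMono_nat_of_lt_succ (fun n => (key n).1)

def pstep (p q : ℤ) : ℤ × ℤ → ℤ × ℤ := fun ab => (-ab.1 - p * ab.2, q * ab.1 + (p*q - 1) * ab.2)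

lemma pstep_rec1 (p q : ℤ) (ab : ℤ × ℤ) (n : ℕ) :
    ((pstep p q)^[n+2] ab).1 = (p*q-2) * ((pstep p q)^[n+1] ab).1 - ((pstep p q)^[n] ab).1 := by
  rw [Function.iterate_succ_apply' (pstep p q) (n+1), Function.iterate_succ_apply' (pstep p q) n]
  simp only [pstep]; ring

lemma pstep_rec2 (p q : ℤ) (ab : ℤ × ℤ) (n : ℕ) :
    ((pstep p q)^[n+2] ab).2 = (p*q-2) * ((pstep p q)^[n+1] ab).2 - ((pstep p q)^[n] ab).2 := by
  rw [Function.iterate_succ_apply' (pstep p q) (n+1), Function.iterate_succ_apply' (pstep p q) n]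
  simp only [pstep]; ring

set_option linter.unusedSectionVars false in
lemma iter_coords {α γ : V} (hα : α ∈ R.Φ) (hγ : γ ∈ R.Φ) (p q : ℤ)
    (hp : R.coroot α γ = (p:ℝ)) (hq : R.coroot γ α = (q:ℝ)) (ab : ℤ × ℤ) (n : ℕ) :
    (fun v => R.s γ (R.s α v))^[n] ((ab.1:ℝ) • α + (ab.2:ℝ) • γ)
      = ((((pstep p q)^[n] ab).1 : ℝ)) • α + ((((pstep p q)^[n] ab).2 : ℝ)) • γ := by
  induction n with
  | zero => simp
  | succ k ih =>
    rw [Function.iterate_succ_apply', Function.iterate_succ_apply', ih]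
    set a : ℝ := (((pstep p q)^[k] ab).1 : ℝ) with had
    set b : ℝ := (((pstep p q)^[k] ab).2 : ℝ) with hbd
    have h1 : R.s α (a • α + b • γ) = (-a - (p:ℝ)*b) • α + b • γ := by
      rw [R.s_apply α hα]
      rw [map_add, map_smul, map_smul, R.coroot_self α hα, hp]
      simp only [smul_eq_mul]
      module
    have h2 : R.s γ ((-a - (p:ℝ)*b) • α + b • γ) =
        (-a - (p:ℝ)*b) • α + ((q:ℝ)*a + ((p:ℝ)*(q:ℝ) - 1)*b) • γ := by
      rw [R.s_apply γ hγ]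
      rw [map_add, map_smul, map_smul, R.coroot_self γ hγ, hq]
      simp only [smul_eq_mul]
      module
    rw [h1, h2]
    simp only [pstep]
    push_cast
    module

set_option linter.unusedSectionVars false in
lemma no_inj (f : ℕ → V) (hmem : ∀ n, f n ∈ R.Φ) (hinj : Function.Injective f) : False :=
  R.Φ.finite_toSet.not_infinite (Set.infinite_of_injective_forall_mem hinj hmem)

set_option linter.unusedSectionVars false in
lemma coord_inj {α γ : V} (hα0 : α ≠ 0) (hind : ∀ c : ℝ, γ ≠ c • α)
    {a b a' b' : ℤ} (h : (a:ℝ) • α + (b:ℝ) • γ = (a':ℝ) • α + (b':ℝ) • γ) :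
    a = a' ∧ b = b' := by
  by_cases hb : b = b'
  · subst hb
    refine ⟨?_, rfl⟩
    have h3 : (a:ℝ) • α = (a':ℝ) • α := add_right_cancel h
    have h4 : ((a:ℝ) - (a':ℝ)) • α = 0 := by rw [sub_smul, h3, sub_self]
    rcases smul_eq_zero.mp h4 with h5 | h5
    · have : (a:ℝ) = (a':ℝ) := by linarith
      exact_mod_cast this
    · exact absurd h5 hα0
  · exfalso
    have hd : ((b:ℝ) - b') ≠ 0 := by
      intro h3
      apply hb
      have : (b:ℝ) = (b':ℝ) := by linarith
      exact_mod_cast this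
    have h6 := sub_eq_zero_of_eq h
    rw [show (a:ℝ)•α + (b:ℝ)•γ - ((a':ℝ)•α + (b':ℝ)•γ) = ((b:ℝ) - b')•γ - ((a':ℝ) - a)•α from by module] at h6
    have h5 : ((b:ℝ) - b') • γ = ((a':ℝ) - a) • α := sub_eq_zero.mp h6
    have hγ : (((a':ℝ)-a)/((b:ℝ)-b')) • α = γ := by
      rw [div_eq_inv_mul, mul_smul, ← h5, smul_smul, inv_mul_cancel₀ hd, one_smul]
    exact hind _ hγ.symm

set_option linter.unusedSectionVars false in
lemma sign_lemma {α γ : V} (hα : α ∈ R.Φ) (hγ : γ ∈ R.Φ) (hind : ∀ c : ℝ, γ ≠ c • α)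
    (hp : 1 ≤ R.pairing α γ) : 1 ≤ R.pairing γ α ∧ R.pairing α γ * R.pairing γ α ≤ 3 := by
  set p := R.pairing α γ with hpd
  set q := R.pairing γ α with hqd
  have hcp : R.coroot α γ = (p:ℝ) := coroot_eq_pairing R hα hγ
  have hcq : R.coroot γ α = (q:ℝ) := coroot_eq_pairing R hγ hα
  have hα0 := R.ne_zero α hα
  have hroot : ∀ (x : V), x ∈ R.Φ → ∀ n, (fun v => R.s γ (R.s α v))^[n] x ∈ R.Φ := by
    intro x hx n
    induction n with
    | zero => simpa
    | succ k ih =>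
      rw [Function.iterate_succ_apply']
      exact R.s_root_mem γ hγ _ (R.s_root_mem α hα _ ih)
  have hq1 : 1 ≤ q := by
    by_contra hq0
    push_neg at hq0
    have hq0' : q ≤ 0 := by omega
    have hS : 2 ≤ 2 - p*q := by nlinarith
    set E : ℕ → ℤ := fun n => (-1)^n * ((pstep p q)^[n] ((0:ℤ),(1:ℤ))).1 with hEd
    have hE0 : E 0 = 0 := by simp [hEd]
    have hE1 : 1 ≤ E 1 := by
      have h1 : ((pstep p q)^[1] ((0:ℤ),(1:ℤ))).1 = -p := by simp [pstep]
      simp only [hEd, h1]; omega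
    have hErec : ∀ n, E (n+2) = (2 - p*q) * E (n+1) - E n := by
      intro n
      show (-1)^(n+2) * ((pstep p q)^[n+2] ((0:ℤ),(1:ℤ))).1
        = (2 - p*q) * ((-1)^(n+1) * ((pstep p q)^[n+1] ((0:ℤ),(1:ℤ))).1)
          - (-1)^n * ((pstep p q)^[n] ((0:ℤ),(1:ℤ))).1
      rw [pstep_rec1 p q ((0:ℤ),(1:ℤ)) n, pow_succ, pow_succ]
      ring
    have hE := mono_seq (2 - p*q) hS E hE0 hE1 hErec
    have hEnonneg : ∀ k, 0 ≤ E k := by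
      intro k
      have := hE.monotone (Nat.zero_le k)
      omega
    set f : ℕ → V := fun n => (fun v => R.s γ (R.s α v))^[n] γ with hfd
    have hfc : ∀ n, f n = ((((pstep p q)^[n] ((0:ℤ),(1:ℤ))).1 : ℝ)) • α
        + ((((pstep p q)^[n] ((0:ℤ),(1:ℤ))).2 : ℝ)) • γ := by
      intro n
      have := iter_coords R hα hγ p q hcp hcq ((0:ℤ),(1:ℤ)) n
      simp only [hfd]
      rw [← this]
      norm_num
    have habs : ∀ k, E k = |((pstep p q)^[k] ((0:ℤ),(1:ℤ))).1| := by
      intro k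
      calc E k = |E k| := (abs_of_nonneg (hEnonneg k)).symm
      _ = |(-1)^k * ((pstep p q)^[k] ((0:ℤ),(1:ℤ))).1| := rfl
      _ = |((pstep p q)^[k] ((0:ℤ),(1:ℤ))).1| := by
            rw [abs_mul, abs_pow, abs_neg, abs_one, one_pow, one_mul]
    have hinj : Function.Injective f := by
      intro n m hnm
      rw [hfc n, hfc m] at hnm
      obtain ⟨h1, h2⟩ := coord_inj hα0 hind hnm
      have : E n = E m := by rw [habs n, habs m, h1]
      exact hE.injective this
    exact no_inj R f (fun n => hroot γ hγ n) hinj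
  refine ⟨hq1, ?_⟩
  by_contra hc
  push_neg at hc
  have hc4 : 4 ≤ p * q := by omega
  have hS : 2 ≤ p*q - 2 := by omega
  set B : ℕ → ℤ := fun n => ((pstep p q)^[n] ((1:ℤ),(0:ℤ))).2 with hBd
  have hB0 : B 0 = 0 := by simp [hBd]
  have hB1 : 1 ≤ B 1 := by
    have h1 : ((pstep p q)^[1] ((1:ℤ),(0:ℤ))).2 = q := by simp [pstep]
    simp only [hBd, h1]; omega
  have hBrec : ∀ n, B (n+2) = (p*q - 2) * B (n+1) - B n := by
    intro n
    show ((pstep p q)^[n+2] ((1:ℤ),(0:ℤ))).2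
      = (p*q - 2) * ((pstep p q)^[n+1] ((1:ℤ),(0:ℤ))).2 - ((pstep p q)^[n] ((1:ℤ),(0:ℤ))).2
    rw [pstep_rec2 p q ((1:ℤ),(0:ℤ)) n]
  have hB := mono_seq (p*q - 2) hS B hB0 hB1 hBrec
  set f : ℕ → V := fun n => (fun v => R.s γ (R.s α v))^[n] α with hfd
  have hfc : ∀ n, f n = ((((pstep p q)^[n] ((1:ℤ),(0:ℤ))).1 : ℝ)) • α
      + ((((pstep p q)^[n] ((1:ℤ),(0:ℤ))).2 : ℝ)) • γ := by
    intro n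
    have := iter_coords R hα hγ p q hcp hcq ((1:ℤ),(0:ℤ)) n
    simp only [hfd]
    rw [← this]
    norm_num
  have hinj : Function.Injective f := by
    intro n m hnm
    rw [hfc n, hfc m] at hnm
    obtain ⟨h1, h2⟩ := coord_inj hα0 hind hnm
    exact hB.injective h2
  exact no_inj R f (fun n => hroot α hα n) hinj

set_option linter.unusedSectionVars false in
lemma root_sub (RO : ReflectionOrder R N) {α γ : V} (hα : α ∈ R.Φ) (hγ : γ ∈ R.Φ)
    (h1 : γ ≠ α) (h2 : γ ≠ -α) (hp : 1 ≤ R.pairing α γ) : γ - α ∈ R.Φ := by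
  have hind := fun c => not_prop R RO hα hγ h1 h2 c
  obtain ⟨hq, hpq⟩ := sign_lemma R hα hγ hind hp
  by_cases hp1 : R.pairing α γ = 1
  · have hs : R.s α γ = γ - α := by
      rw [R.s_apply α hα, coroot_eq_pairing R hα hγ, hp1]
      norm_num
    rw [← hs]; exact R.s_root_mem α hα γ hγ
  · have hp2 : 2 ≤ R.pairing α γ := by omega
    have hq1 : R.pairing γ α = 1 := by
      by_contra hq2
      have : 2 ≤ R.pairing γ α := by omega
      nlinarith
    have hs : R.s γ α = -(γ - α) := by
      rw [R.s_apply γ hγ, coroot_eq_pairing R hγ hα, hq1]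
      norm_num
    have hmem := R.s_root_mem γ hγ α hα
    rw [hs] at hmem
    have := R.neg_mem _ hmem
    simpa using this

def Pset (RO : ReflectionOrder R N) (t : Fin N) (x : V) : Prop :=
  (∃ i : Fin N, (t:ℕ) ≤ (i:ℕ) ∧ RO.β i = x) ∨ (∃ i : Fin N, (i:ℕ) < (t:ℕ) ∧ RO.β i = -x)

set_option linter.unusedSectionVars false in
lemma order3' (RO : ReflectionOrder R N) {i j k : Fin N} (h : RO.β i + RO.β j = RO.β k) :
    ((i:ℕ) < (k:ℕ) ∧ (k:ℕ) < (j:ℕ)) ∨ ((j:ℕ) < (k:ℕ) ∧ (k:ℕ) < (i:ℕ)) := by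
  rcases RO.order3 i j k h with ⟨h1, h2⟩ | ⟨h1, h2⟩
  · exact Or.inl ⟨h1, h2⟩
  · exact Or.inr ⟨h1, h2⟩

set_option linter.unusedSectionVars false in
lemma Pset_root (RO : ReflectionOrder R N) (t : Fin N) {x : V} (h : Pset R RO t x) : x ∈ R.Φ := by
  rcases h with ⟨i, _, hi⟩ | ⟨i, _, hi⟩
  · exact hi ▸ beta_root R RO i
  · have := R.neg_mem _ (hi ▸ beta_root R RO i)
    simpa using this

set_option linter.unusedSectionVars false in
lemma Pset_alpha (RO : ReflectionOrder R N) (t : Fin N) : Pset R RO t (RO.β t) :=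
  Or.inl ⟨t, le_refl _, rfl⟩

set_option linter.unusedSectionVars false in
lemma Pset_total (RO : ReflectionOrder R N) (t : Fin N) {x : V} (hx : x ∈ R.Φ) :
    Pset R RO t x ∨ Pset R RO t (-x) := by
  rcases R.mem_pos_or x hx with h | h
  · obtain ⟨i, hi⟩ := idx_exists R RO h
    rcases le_or_gt (t:ℕ) (i:ℕ) with hle | hlt
    · exact Or.inl (Or.inl ⟨i, hle, hi⟩)
    · exact Or.inr (Or.inr ⟨i, hlt, by rw [neg_neg]; exact hi⟩)
  · obtain ⟨i, hi⟩ := idx_exists R RO h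
    rcases le_or_gt (t:ℕ) (i:ℕ) with hle | hlt
    · exact Or.inr (Or.inl ⟨i, hle, hi⟩)
    · exact Or.inl (Or.inr ⟨i, hlt, hi⟩)

set_option linter.unusedSectionVars false in
lemma Pset_not_neg (RO : ReflectionOrder R N) (t : Fin N) {x : V}
    (h1 : Pset R RO t x) (h2 : Pset R RO t (-x)) : False := by
  rcases h1 with ⟨i, hti, hix⟩ | ⟨i, hit, hix⟩ <;> rcases h2 with ⟨j, htj, hjx⟩ | ⟨j, hjt, hjx⟩
  · exact R.pos_not_neg _ (hix ▸ beta_pos R RO i) (hjx ▸ beta_pos R RO j)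
  · rw [neg_neg] at hjx
    have := RO.inj (hix.trans hjx.symm)
    subst this; omega
  · have := RO.inj (hix.trans hjx.symm)
    subst this; omega
  · rw [neg_neg] at hjx
    exact R.pos_not_neg _ (hjx ▸ beta_pos R RO j) (hix ▸ beta_pos R RO i)

set_option linter.unusedSectionVars false in
lemma Pset_closed_mixed (RO : ReflectionOrder R N) (t : Fin N) {x y : V}
    (hx : ∃ i : Fin N, (t:ℕ) ≤ (i:ℕ) ∧ RO.β i = x)
    (hy : ∃ j : Fin N, (j:ℕ) < (t:ℕ) ∧ RO.β j = -y)
    (hxy : x + y ∈ R.Φ) : Pset R RO t (x + y) := by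
  obtain ⟨i, hti, hix⟩ := hx
  obtain ⟨j, hjt, hjy⟩ := hy
  rcases R.mem_pos_or _ hxy with hz | hz
  · obtain ⟨k, hk⟩ := idx_exists R RO hz
    have hsum : RO.β k + RO.β j = RO.β i := by rw [hk, hjy, hix]; abel
    rcases order3' R RO hsum with ⟨h1, h2⟩ | ⟨h1, h2⟩
    · exfalso; omega
    · exact Or.inl ⟨k, by omega, hk⟩
  · obtain ⟨k, hk⟩ := idx_exists R RO hz
    have hsum : RO.β i + RO.β k = RO.β j := by rw [hk, hjy, hix]; abel
    rcases order3' R RO hsum with ⟨h1, h2⟩ | ⟨h1, h2⟩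
    · exfalso; omega
    · exact Or.inr ⟨k, by omega, hk⟩

set_option linter.unusedSectionVars false in
lemma Pset_closed (RO : ReflectionOrder R N) (t : Fin N) {x y : V}
    (hx : Pset R RO t x) (hy : Pset R RO t y) (hxy : x + y ∈ R.Φ) : Pset R RO t (x + y) := by
  rcases hx with ⟨i, hti, hix⟩ | hxn
  · rcases hy with ⟨j, htj, hjy⟩ | hyn
    · have hsum0 : RO.β i + RO.β j ∈ R.Φ := by rw [hix, hjy]; exact hxy
      have hsum' := R.pos_add_mem _ (beta_pos R RO i) _ (beta_pos R RO j) hsum0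
      rw [hix, hjy] at hsum'
      obtain ⟨k, hk⟩ := idx_exists R RO hsum'
      have hsum : RO.β i + RO.β j = RO.β k := by rw [hix, hjy, hk]
      rcases order3' R RO hsum with ⟨h1, h2⟩ | ⟨h1, h2⟩ <;> exact Or.inl ⟨k, by omega, hk⟩
    · exact Pset_closed_mixed R RO t ⟨i, hti, hix⟩ hyn hxy
  · rcases hy with ⟨j, htj, hjy⟩ | hyn
    · have := Pset_closed_mixed R RO t ⟨j, htj, hjy⟩ hxn (by rwa [add_comm])
      rwa [add_comm] at this
    · obtain ⟨i, hit, hix⟩ := hxn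
      obtain ⟨j, hjt, hjy⟩ := hyn
      have h' : RO.β i + RO.β j = -(x + y) := by rw [hix, hjy]; abel
      have hmem : RO.β i + RO.β j ∈ R.Φ := by rw [h']; exact R.neg_mem _ hxy
      have hpos := R.pos_add_mem _ (beta_pos R RO i) _ (beta_pos R RO j) hmem
      rw [h'] at hpos
      obtain ⟨k, hk⟩ := idx_exists R RO hpos
      have hsum : RO.β i + RO.β j = RO.β k := by rw [h', hk]
      rcases order3' R RO hsum with ⟨h1, h2⟩ | ⟨h1, h2⟩ <;> exact Or.inr ⟨k, by omega, hk⟩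

set_option linter.unusedSectionVars false in
lemma alpha_indec (RO : ReflectionOrder R N) (t : Fin N) {x y : V}
    (hx : Pset R RO t x) (hy : Pset R RO t y) (hxy : x + y = RO.β t) : False := by
  rcases hx with ⟨i, hti, hix⟩ | ⟨i, hit, hix⟩ <;> rcases hy with ⟨j, htj, hjy⟩ | ⟨j, hjt, hjy⟩
  · have hsum : RO.β i + RO.β j = RO.β t := by rw [hix, hjy]; exact hxy
    rcases order3' R RO hsum with ⟨h1, h2⟩ | ⟨h1, h2⟩ <;> omega
  · have hsum : RO.β t + RO.β j = RO.β i := by rw [hjy, hix, ← hxy]; abel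
    rcases order3' R RO hsum with ⟨h1, h2⟩ | ⟨h1, h2⟩ <;> omega
  · have hsum : RO.β t + RO.β i = RO.β j := by rw [hix, hjy, ← hxy]; abel
    rcases order3' R RO hsum with ⟨h1, h2⟩ | ⟨h1, h2⟩ <;> omega
  · have h' : RO.β i + RO.β j = -(RO.β t) := by rw [hix, hjy, ← hxy]; abel
    have hmem : RO.β i + RO.β j ∈ R.Φ := by rw [h']; exact R.neg_mem _ (beta_root R RO t)
    have hpos := R.pos_add_mem _ (beta_pos R RO i) _ (beta_pos R RO j) hmem
    rw [h'] at hpos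
    exact R.pos_not_neg _ (beta_pos R RO t) hpos

set_option linter.unusedSectionVars false in
lemma s_eq_pairing_smul {α x : V} (hα : α ∈ R.Φ) (hx : x ∈ R.Φ) :
    R.s α x = x - (R.pairing α x : ℝ) • α := by
  rw [R.s_apply α hα, coroot_eq_pairing R hα hx]

set_option linter.unusedSectionVars false in
lemma lemA (RO : ReflectionOrder R N) (t : Fin N) :
    ∀ (k : ℕ) (x : V), (R.pairing (RO.β t) x).natAbs ≤ k → Pset R RO t x → x ≠ RO.β t →
      Pset R RO t (R.s (RO.β t) x) ∧ R.s (RO.β t) x ≠ RO.β t := by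
  have hαΦ : RO.β t ∈ R.Φ := beta_root R RO t
  intro k
  induction k with
  | zero =>
    intro x hb hPx hxne
    have hxΦ := Pset_root R RO t hPx
    have hm : R.pairing (RO.β t) x = 0 := by omega
    have hs : R.s (RO.β t) x = x := by
      rw [s_eq_pairing_smul R hαΦ hxΦ, hm]; norm_num
    rw [hs]; exact ⟨hPx, hxne⟩
  | succ k ih =>
    intro x hb hPx hxne
    have hxΦ := Pset_root R RO t hPx
    have hxnne : x ≠ -(RO.β t) := by
      intro h
      apply Pset_not_neg R RO t (Pset_alpha R RO t)
      rw [show -(RO.β t) = x from h.symm]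
      exact hPx
    have hsΦ : R.s (RO.β t) x ∈ R.Φ := R.s_root_mem _ hαΦ x hxΦ
    have hne2 : R.s (RO.β t) x ≠ RO.β t := by
      intro h
      apply hxnne
      have h2 := congrArg (R.s (RO.β t)) h
      rw [s_s R hαΦ, s_self R hαΦ] at h2
      exact h2
    refine ⟨?_, hne2⟩
    set m := R.pairing (RO.β t) x with hmd
    rcases lt_trichotomy m 0 with hm | hm | hm
    · -- m ≤ -1
      have hxaΦ : x + RO.β t ∈ R.Φ := by
        have hnx : -x ∈ R.Φ := R.neg_mem x hxΦ
        have hne1 : -x ≠ RO.β t := fun h => hxnne (by rw [← h, neg_neg])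
        have hne2' : -x ≠ -(RO.β t) := fun h => hxne (by have := congrArg Neg.neg h; simpa using this)
        have hp1 : 1 ≤ R.pairing (RO.β t) (-x) := by
          rw [pairing_neg_right R hαΦ hxΦ]; omega
        have h3 := root_sub R RO hαΦ hnx hne1 hne2' hp1
        have h4 := R.neg_mem _ h3
        have h5 : -(-x - RO.β t) = x + RO.β t := by abel
        rwa [h5] at h4
      have hPxa : Pset R RO t (x + RO.β t) := Pset_closed R RO t hPx (Pset_alpha R RO t) hxaΦ
      have hxane : x + RO.β t ≠ RO.β t := by
        intro h
        apply R.ne_zero x hxΦ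
        have := congrArg (· - RO.β t) h
        simpa using this
      by_cases hm1 : m = -1
      · have hcast : x - ((m : ℤ) : ℝ) • RO.β t = x + RO.β t := by
          rw [hm1]; push_cast; module
        rw [s_eq_pairing_smul R hαΦ hxΦ, ← hmd, hcast]
        exact hPxa
      · have hm2 : m ≤ -2 := by omega
        have hpair : R.pairing (RO.β t) (x + RO.β t) = m + 2 := by
          rw [pairing_add_self R hαΦ hxΦ hxaΦ, ← hmd]
        have hbk : (R.pairing (RO.β t) (x + RO.β t)).natAbs ≤ k := by rw [hpair]; omega
        obtain ⟨hPy, hyne⟩ := ih (x + RO.β t) hbk hPxa hxane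
        have hrel : R.s (RO.β t) x = R.s (RO.β t) (x + RO.β t) + RO.β t := by
          rw [map_add, s_self R hαΦ]; abel
        rw [hrel]
        exact Pset_closed R RO t hPy (Pset_alpha R RO t) (by rw [← hrel]; exact hsΦ)
    · -- m = 0
      have hcast : x - ((m : ℤ) : ℝ) • RO.β t = x := by rw [hm]; norm_num
      rw [s_eq_pairing_smul R hαΦ hxΦ, ← hmd, hcast]
      exact hPx
    · -- m ≥ 1
      have hx1Φ : x - RO.β t ∈ R.Φ := root_sub R RO hαΦ hxΦ hxne hxnne (by omega)
      have hP1 : Pset R RO t (x - RO.β t) := by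
        rcases Pset_total R RO t hx1Φ with h | h
        · exact h
        · exfalso
          apply alpha_indec R RO t h hPx
          abel
      have hx1ne : x - RO.β t ≠ RO.β t := by
        intro h
        have h2 : x = (2:ℝ) • RO.β t := by
          have h3 : x = RO.β t + RO.β t := by
            have := congrArg (· + RO.β t) h
            simpa using this
          rw [h3, two_smul]
        exact not_double R RO hαΦ (h2 ▸ hxΦ)
      by_cases hm1 : m = 1
      · have hcast : x - ((m : ℤ) : ℝ) • RO.β t = x - RO.β t := by rw [hm1]; norm_num
        rw [s_eq_pairing_smul R hαΦ hxΦ, ← hmd, hcast]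
        exact hP1
      · have hm2 : 2 ≤ m := by omega
        have hpair : R.pairing (RO.β t) (x - RO.β t) = m - 2 := by
          rw [pairing_sub_self R hαΦ hxΦ hx1Φ, ← hmd]
        have hbk : (R.pairing (RO.β t) (x - RO.β t)).natAbs ≤ k := by rw [hpair]; omega
        obtain ⟨hPy, hyne⟩ := ih (x - RO.β t) hbk hP1 hx1ne
        have hrel : R.s (RO.β t) x = R.s (RO.β t) (x - RO.β t) - RO.β t := by
          rw [map_sub, s_self R hαΦ]; abel
        have hyd : R.s (RO.β t) (x - RO.β t) - RO.β t ∈ R.Φ := by rw [← hrel]; exact hsΦ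
        rw [hrel]
        rcases Pset_total R RO t hyd with h | h
        · exact h
        · exfalso
          apply alpha_indec R RO t h hPy
          abel

set_option linter.unusedSectionVars false in
lemma lemA' (RO : ReflectionOrder R N) (t : Fin N) {x : V} (hPx : Pset R RO t x)
    (hxne : x ≠ RO.β t) :
    Pset R RO t (R.s (RO.β t) x) ∧ R.s (RO.β t) x ≠ RO.β t :=
  lemA R RO t (R.pairing (RO.β t) x).natAbs x le_rfl hPx hxne

set_option linter.unusedSectionVars false in
lemma inv_mem_prod : ∀ (l : List V), (∀ a ∈ l, a ∈ R.Φ) → ∀ x ∈ R.Φ,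
    (((l.map R.s).prod)⁻¹ : V ≃ₗ[ℝ] V) x ∈ R.Φ := by
  intro l
  induction l with
  | nil => intro _ x hx; simpa using hx
  | cons a l ih =>
    intro hl x hx
    have haΦ : a ∈ R.Φ := hl a List.mem_cons_self
    have h1 : ((a :: l).map R.s).prod = R.s a * (l.map R.s).prod := by
      simp [List.prod_cons]
    rw [h1, mul_inv_rev, s_inv R haΦ]
    exact ih (fun b hb => hl b (List.mem_cons_of_mem a hb)) _ (R.s_root_mem a haΦ x hx)

set_option linter.unusedSectionVars false in
lemma main (RO : ReflectionOrder R N) :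
    ∀ (d n : ℕ), n + d = N →
    ∀ u : V ≃ₗ[ℝ] V, u = ((List.ofFn fun i => R.s (RO.β i)).drop n).prod →
    {x : V | x ∈ R.pos ∧ -((u⁻¹ : V ≃ₗ[ℝ] V) x) ∈ R.pos} = RO.β '' {i : Fin N | n ≤ (i : ℕ)} := by
  intro d
  induction d with
  | zero =>
    intro n hn u hu
    have hdrop : (List.ofFn fun i => R.s (RO.β i)).drop n = [] :=
      List.drop_eq_nil_of_le (by simp; omega)
    rw [hdrop] at hu
    simp only [List.prod_nil] at hu
    subst hu
    ext x
    simp only [Set.mem_setOf_eq, Set.mem_image, Set.mem_setOf_eq, inv_one]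
    apply iff_of_false
    · rintro ⟨h1, h2⟩
      have h2' : -x ∈ R.pos := by simpa using h2
      exact R.pos_not_neg x h1 h2'
    · rintro ⟨j, hj, -⟩
      have := j.isLt
      omega
  | succ d ih =>
    intro n hn u hu
    have hnN : n < N := by omega
    set t : Fin N := ⟨n, hnN⟩ with htd
    have htval : (t:ℕ) = n := rfl
    have hαΦ : RO.β t ∈ R.Φ := beta_root R RO t
    set u' : V ≃ₗ[ℝ] V := ((List.ofFn fun i => R.s (RO.β i)).drop (n+1)).prod with hu'd
    have hG0 := ih (n+1) (by omega) u' hu'd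
    have hG : ∀ z : V, (z ∈ R.pos ∧ -((u'⁻¹ : V ≃ₗ[ℝ] V) z) ∈ R.pos)
        ↔ ∃ i : Fin N, n+1 ≤ (i:ℕ) ∧ RO.β i = z := by
      intro z
      have h1 := Set.ext_iff.mp hG0 z
      simpa only [Set.mem_setOf_eq, Set.mem_image] using h1
    have hsplit : (List.ofFn fun i => R.s (RO.β i)).drop n
        = R.s (RO.β t) :: (List.ofFn fun i => R.s (RO.β i)).drop (n+1) := by
      rw [List.drop_eq_getElem_cons (by simp; omega)]
      congr 1
      simp [List.getElem_ofFn]; rfl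
    have hu2 : u = R.s (RO.β t) * u' := by
      rw [hu'd, hu, hsplit, List.prod_cons]
    have hkey : ∀ x : V, (u⁻¹ : V ≃ₗ[ℝ] V) x = (u'⁻¹ : V ≃ₗ[ℝ] V) (R.s (RO.β t) x) := by
      intro x
      rw [hu2, mul_inv_rev, s_inv R hαΦ]
      rfl
    have hu'root : ∀ z ∈ R.Φ, (u'⁻¹ : V ≃ₗ[ℝ] V) z ∈ R.Φ := by
      intro z hz
      have hl : (List.ofFn fun i => R.s (RO.β i)).drop (n+1)
          = (((List.ofFn RO.β).drop (n+1)).map R.s) := by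
        rw [List.map_drop, List.map_ofFn]
        rfl
      rw [hu'd, hl]
      apply inv_mem_prod R _ _ z hz
      intro a ha
      obtain ⟨i, hi⟩ := List.mem_ofFn.mp (List.mem_of_mem_drop ha)
      rw [← hi]
      exact beta_root R RO i
    have hsign1 : ∀ z, z ∈ R.Φ → ¬(-((u'⁻¹ : V ≃ₗ[ℝ] V) z) ∈ R.pos)
        → (u'⁻¹ : V ≃ₗ[ℝ] V) z ∈ R.pos :=
      fun z hz h => (R.mem_pos_or _ (hu'root z hz)).resolve_right h
    ext x
    simp only [Set.mem_setOf_eq, Set.mem_image, Set.mem_setOf_eq]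
    rw [hkey x]
    by_cases hxpos : x ∈ R.pos
    · obtain ⟨i, hi⟩ := idx_exists R RO hxpos
      have hxΦ : x ∈ R.Φ := R.pos_subset hxpos
      have hzΦ : R.s (RO.β t) x ∈ R.Φ := R.s_root_mem _ hαΦ x hxΦ
      rcases lt_trichotomy ((i:ℕ)) n with hlt | heq | hgt
      · -- i < n : both sides false
        have hPnx : Pset R RO t (-x) := Or.inr ⟨i, by omega, by rw [neg_neg]; exact hi⟩
        have hnxne : -x ≠ RO.β t := by
          intro h
          have hx' : x = -(RO.β t) := by rw [← h, neg_neg]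
          exact R.pos_not_neg _ (beta_pos R RO t) (hx' ▸ hxpos)
        obtain ⟨hPw, hwne⟩ := lemA' R RO t hPnx hnxne
        have hwz : R.s (RO.β t) (-x) = -(R.s (RO.β t) x) := map_neg _ x
        rw [hwz] at hPw hwne
        apply iff_of_false
        · rintro ⟨-, hc⟩
          rcases hPw with ⟨kk, htk, hk⟩ | ⟨kk, hkt, hk⟩
          · -- β kk = -z, kk ≥ t, kk ≠ t
            have hkn : (kk:ℕ) ≠ n := by
              intro h
              apply hwne
              rw [← hk]
              congr 1
              exact Fin.ext (by omega)
            have hpos2 := (hG (-(R.s (RO.β t) x))).mpr ⟨kk, by omega, hk⟩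
            have h6 : (u'⁻¹ : V ≃ₗ[ℝ] V) (R.s (RO.β t) x) ∈ R.pos := by
              have := hpos2.2
              rwa [map_neg, neg_neg] at this
            exact R.pos_not_neg _ h6 hc
          · -- β kk = z, kk < t
            rw [neg_neg] at hk
            have hzpos : R.s (RO.β t) x ∈ R.pos := hk ▸ beta_pos R RO kk
            have hnofind : ¬∃ j : Fin N, n+1 ≤ (j:ℕ) ∧ RO.β j = R.s (RO.β t) x := by
              rintro ⟨j, hj, hjz⟩
              have := RO.inj (hjz.trans hk.symm)
              subst this
              omega
            exact hnofind ((hG _).mp ⟨hzpos, hc⟩)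
        · rintro ⟨j, hj, hjx⟩
          have := RO.inj (hjx.trans hi.symm)
          subst this
          omega
      · -- i = n : x = β t, both sides true
        have hit : i = t := Fin.ext (by omega)
        have hxα : x = RO.β t := by rw [← hi, hit]
        have hnofind : ¬∃ j : Fin N, n+1 ≤ (j:ℕ) ∧ RO.β j = RO.β t := by
          rintro ⟨j, hj, hjz⟩
          have := RO.inj hjz
          subst this
          omega
        have h3 : ¬(-((u'⁻¹ : V ≃ₗ[ℝ] V) (RO.β t)) ∈ R.pos) :=
          fun hc => hnofind ((hG _).mp ⟨beta_pos R RO t, hc⟩)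
        have h4 := hsign1 _ hαΦ h3
        apply iff_of_true
        · refine ⟨hxpos, ?_⟩
          rw [hxα, s_self R hαΦ, map_neg, neg_neg]
          exact h4
        · exact ⟨i, by omega, hi⟩
      · -- n < i : both sides true
        have hPx : Pset R RO t x := Or.inl ⟨i, by omega, hi⟩
        have hxne : x ≠ RO.β t := by
          intro h
          have : i = t := RO.inj (hi.trans h)
          subst this
          omega
        obtain ⟨hPz, hzne⟩ := lemA' R RO t hPx hxne
        apply iff_of_true
        · refine ⟨hxpos, ?_⟩
          rcases hPz with ⟨kk, htk, hk⟩ | ⟨kk, hkt, hk⟩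
          · have hkn : (kk:ℕ) ≠ n := by
              intro h
              apply hzne
              rw [← hk]
              congr 1
              exact Fin.ext (by omega)
            exact ((hG _).mpr ⟨kk, by omega, hk⟩).2
          · have hnofind : ¬∃ j : Fin N, n+1 ≤ (j:ℕ) ∧ RO.β j = -(R.s (RO.β t) x) := by
              rintro ⟨j, hj, hjz⟩
              have := RO.inj (hjz.trans hk.symm)
              subst this
              omega
            have hnzpos : -(R.s (RO.β t) x) ∈ R.pos := hk ▸ beta_pos R RO kk
            have h3 : ¬(-((u'⁻¹ : V ≃ₗ[ℝ] V) (-(R.s (RO.β t) x))) ∈ R.pos) :=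
              fun hc => hnofind ((hG _).mp ⟨hnzpos, hc⟩)
            have h4 := hsign1 _ (R.neg_mem _ hzΦ) h3
            rw [map_neg] at h4
            exact h4
        · exact ⟨i, by omega, hi⟩
    · apply iff_of_false
      · rintro ⟨h, -⟩; exact hxpos h
      · rintro ⟨j, -, hjx⟩; exact hxpos (hjx ▸ beta_pos R RO j)

end S1Aux

/-- for a reflection order `β₁ ≺ ⋯ ≺ β_N`, `0 ≤ n ≤ N` and
`u = s_{β_{n+1}} ⋯ s_{β_N}`, one has `{β ∈ Φ⁺ : u⁻¹ β ∈ Φ⁻} = {β_{n+1}, …, β_N}`. -/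
theorem statement1 (R : RootSystemData V) {N : ℕ} (RO : ReflectionOrder R N)
    (n : ℕ) (hn : n ≤ N)
    (u : V ≃ₗ[ℝ] V) (hu : u = ((List.ofFn fun i => R.s (RO.β i)).drop n).prod) :
    {x : V | x ∈ R.pos ∧ -((u⁻¹ : V ≃ₗ[ℝ] V) x) ∈ R.pos}
      = RO.β '' {i : Fin N | n ≤ (i : ℕ)} := by
  exact S1Aux.main R RO (N - n) n (by omega) u hu

end
end

section
/- Let ≺ be a reflection order on Φ⁺ (Φ⁺ = {β₁ ≺ ⋯ ≺ β_N}), let x = w t^μ ∈ W̃ with w ∈ W and μ ∈ Λ, let u ∈ W, and let 0 ≤ n ≤ N. Let A be the set of tuples ((n₁, ν₁), …, (n_K, ν_K)) with K ≥ 0, 1 ≤ n₁ < n₂ < ⋯ < n_K ≤ n and ν₁, …, ν_K ∈ ℤ such that, setting b_h := (uβ_{n_h}, ν_h) ∈ Φ_af, the affine root r_{b_K} r_{b_{K−1}} ⋯ r_{b_{h+1}}(b_h) is negative for every h ∈ {1, …, K}, and r_{b₁} r_{b₂} ⋯ r_{b_K} = x in W̃. Let P be the set of paths p ∈ Paths^≺_{≤n}(w⁻¹u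 ⇒ u) with wt(p) = u⁻¹wμ. Then the following assignment is a well-defined bijection from A onto P: send ((n₁, ν₁), …, (n_K, ν_K)) to the ≺-increasing path of length K from w⁻¹u to u whose edge labels are the roots β_{n₁}, …, β_{n_K}, and in which the edge labelled β_{n_h} carries the integer m'_h, where (β'_h, m'_h) := r_{b_K} r_{b_{K−1}} ⋯ r_{b_h}(b_h) ∈ Φ_af. -/
noncomputable section

open Module

variable {V : Type} [AddCommGroup V] [Module ℝ V] [DecidableEq V]

namespace RootSystemData

variable (R : RootSystemData V)

lemma s_self {α : V} (hα : α ∈ R.Φ) : R.s α α = -α := by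
  rw [R.s_apply α hα α, R.coroot_self α hα, two_smul]; abel

lemma s_s {α : V} (hα : α ∈ R.Φ) (v : V) : R.s α (R.s α v) = v := by
  rw [R.s_apply α hα v, R.s_apply α hα, map_sub, map_smul, R.coroot_self α hα,
    smul_eq_mul]
  module

lemma s_mul_self {α : V} (hα : α ∈ R.Φ) : R.s α * R.s α = 1 :=
  LinearEquiv.toLinearMap_injective (LinearMap.ext fun v => R.s_s hα v)

lemma s_inv {α : V} (hα : α ∈ R.Φ) : (R.s α)⁻¹ = R.s α :=
  inv_eq_of_mul_eq_one_left (R.s_mul_self hα)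

lemma s_mem {α : V} (hα : α ∈ R.Φ) : R.s α ∈ R.Wgrp :=
  Subgroup.subset_closure ⟨α, hα, rfl⟩

lemma w_maps {g : V ≃ₗ[ℝ] V} (hg : g ∈ R.Wgrp) {α : V} (hα : α ∈ R.Φ) : g α ∈ R.Φ := by
  revert α
  have : ∀ α ∈ R.Φ, g α ∈ R.Φ ∧ g⁻¹ α ∈ R.Φ := by
    refine Subgroup.closure_induction (k := (fun α => R.s α) '' (R.Φ : Set V))
      (p := fun g _ => ∀ α ∈ R.Φ, g α ∈ R.Φ ∧ g⁻¹ α ∈ R.Φ) ?_ ?_ ?_ ?_ hg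
    · rintro x ⟨β, hβ, rfl⟩ α hα
      refine ⟨R.s_root_mem β hβ α hα, ?_⟩
      rw [R.s_inv hβ]; exact R.s_root_mem β hβ α hα
    · intro α hα; exact ⟨hα, hα⟩
    · intro x y _ _ hx hy α hα
      constructor
      · show x (y α) ∈ R.Φ
        exact (hx _ (hy α hα).1).1
      · show (y⁻¹ * x⁻¹) α ∈ R.Φ
        show y⁻¹ (x⁻¹ α) ∈ R.Φ
        exact (hy _ (hx α hα).2).2
    · intro x _ hx α hα
      exact ⟨(hx α hα).2, by rw [inv_inv]; exact (hx α hα).1⟩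
  intro α hα; exact (this α hα).1

lemma prod_s_mem (l : List V) (hl : ∀ a ∈ l, a ∈ R.Φ) : (l.map R.s).prod ∈ R.Wgrp := by
  induction l with
  | nil => simp [Subgroup.one_mem]
  | cons a t ih =>
    rw [List.map_cons, List.prod_cons]
    exact Subgroup.mul_mem _ (R.s_mem (hl a (by simp))) (ih fun x hx => hl x (by simp [hx]))

lemma refl_eq_aux {γ : V} (hγ : γ ∈ R.Φ) (c : Module.Dual ℝ V) (hcγ : c γ = 0)
    (T : V ≃ₗ[ℝ] V) (hT : ∀ v, T v = v + c v • γ) (hTΦ : ∀ β ∈ R.Φ, T β ∈ R.Φ) :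
    c = 0 := by
  refine LinearMap.ext_on R.span_eq ?_
  intro β hβ
  show c β = (0 : Module.Dual ℝ V) β
  rw [LinearMap.zero_apply]
  by_contra hc
  have hmem : ∀ k : ℕ, β + (k : ℝ) • (c β • γ) ∈ R.Φ := by
    intro k
    induction k with
    | zero => simpa using hβ
    | succ k ih =>
      have : T (β + (k : ℝ) • (c β • γ)) = β + ((k : ℝ) + 1) • (c β • γ) := by
        rw [hT]
        have : c (β + (k : ℝ) • c β • γ) = c β := by
          simp [map_add, map_smul, hcγ]
        rw [this]
        rw [add_smul, one_smul, smul_smul]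
        abel
      have h2 := hTΦ _ ih
      rw [this] at h2
      push_cast
      exact h2
  have hx : c β • γ ≠ 0 := smul_ne_zero hc (R.ne_zero γ hγ)
  have hinj : Function.Injective (fun k : ℕ => β + (k : ℝ) • (c β • γ)) := by
    intro k1 k2 h
    have h' : (k1 : ℝ) • (c β • γ) = (k2 : ℝ) • (c β • γ) := add_left_cancel h
    have h2 : (k1 : ℝ) = (k2 : ℝ) := smul_left_injective ℝ hx h'
    exact_mod_cast h2
  have := Set.infinite_of_injective_forall_mem (s := (R.Φ : Set V)) hinj (fun k => hmem k)
  exact this (R.Φ.finite_toSet)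

lemma s_conj {g : V ≃ₗ[ℝ] V} (hg : g ∈ R.Wgrp) {α : V} (hα : α ∈ R.Φ) :
    R.s (g α) = g * R.s α * g⁻¹ := by
  have hgα : g α ∈ R.Φ := R.w_maps hg hα
  set γ := g α with hγdef
  set T : V ≃ₗ[ℝ] V := R.s γ * (g * R.s α * g⁻¹) with hTdef
  set c : Module.Dual ℝ V :=
    R.coroot α ∘ₗ (g⁻¹ : V ≃ₗ[ℝ] V).toLinearMap - R.coroot γ with hcdef
  have hT : ∀ v, T v = v + c v • γ := by
    intro v
    have h1 : (g * R.s α * g⁻¹) v = v - R.coroot α (g⁻¹ v) • γ := by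
      show g (R.s α (g⁻¹ v)) = _
      rw [R.s_apply α hα, map_sub, map_smul]
      have : g (g⁻¹ v) = v := by
        show (g * g⁻¹) v = v
        rw [mul_inv_cancel]; rfl
      rw [this, hγdef]
    show R.s γ ((g * R.s α * g⁻¹) v) = _
    rw [h1, R.s_apply γ hgα, map_sub, map_smul, R.coroot_self γ hgα, hcdef]
    simp only [LinearMap.sub_apply, LinearMap.coe_comp, Function.comp_apply,
      LinearEquiv.coe_coe, smul_eq_mul]
    module
  have hcγ : c γ = 0 := by
    rw [hcdef]
    simp only [LinearMap.sub_apply, LinearMap.coe_comp, Function.comp_apply, LinearEquiv.coe_coe]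
    have : g⁻¹ γ = α := by
      rw [hγdef]; show (g⁻¹ * g) α = α; rw [inv_mul_cancel]; rfl
    rw [this, R.coroot_self α hα, R.coroot_self γ hgα, sub_self]
  have hTW : T ∈ R.Wgrp := by
    refine Subgroup.mul_mem _ (R.s_mem hgα) (Subgroup.mul_mem _ (Subgroup.mul_mem _ hg
      (R.s_mem hα)) (Subgroup.inv_mem _ hg))
  have hc0 : c = 0 := R.refl_eq_aux hgα c hcγ T hT (fun β hβ => R.w_maps hTW hβ)
  have hT1 : T = 1 := by
    apply LinearEquiv.toLinearMap_injective
    apply LinearMap.ext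
    intro v
    rw [show ((1 : V ≃ₗ[ℝ] V) : V →ₗ[ℝ] V) v = v from rfl]
    show T v = v
    rw [hT v, hc0]
    simp
  have : R.s γ * T = R.s γ := by rw [hT1, mul_one]
  rw [hTdef, ← mul_assoc, R.s_mul_self hgα, one_mul] at this
  exact this.symm

lemma s_conj_apply {g : V ≃ₗ[ℝ] V} (hg : g ∈ R.Wgrp) {α : V} (hα : α ∈ R.Φ) (v : V) :
    R.s (g α) v = g (R.s α (g⁻¹ v)) := by
  rw [R.s_conj hg hα]; rfl

lemma coroot_conj {g : V ≃ₗ[ℝ] V} (hg : g ∈ R.Wgrp) {α : V} (hα : α ∈ R.Φ) (v : V) :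
    R.coroot (g α) v = R.coroot α (g⁻¹ v) := by
  have hgα : g α ∈ R.Φ := R.w_maps hg hα
  have h1 : R.s (g α) v = v - R.coroot (g α) v • g α := R.s_apply _ hgα v
  have h2 : R.s (g α) v = v - R.coroot α (g⁻¹ v) • g α := by
    rw [R.s_conj_apply hg hα v, R.s_apply α hα, map_sub, map_smul]
    have : g (g⁻¹ v) = v := by show (g * g⁻¹) v = v; rw [mul_inv_cancel]; rfl
    rw [this]
  have h3 : R.coroot (g α) v • g α = R.coroot α (g⁻¹ v) • g α := by
    have h := h1.symm.trans h2
    rwa [sub_right_inj] at h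
  have hne : g α ≠ 0 := R.ne_zero _ hgα
  have h4 : (R.coroot (g α) v - R.coroot α (g⁻¹ v)) • g α = 0 := by
    rw [sub_smul, h3, sub_self]
  rcases smul_eq_zero.mp h4 with h | h
  · exact sub_eq_zero.mp h
  · exact absurd h hne

lemma pairing_conj {g : V ≃ₗ[ℝ] V} (hg : g ∈ R.Wgrp) {α β : V} (hα : α ∈ R.Φ)
    (hβ : β ∈ R.Φ) : R.pairing (g α) (g β) = R.pairing α β := by
  have h1 : (R.pairing (g α) (g β) : ℝ) = (R.pairing α β : ℝ) := by
    rw [R.pairing_eq _ (R.w_maps hg hα) _ (R.w_maps hg hβ), R.pairing_eq α hα β hβ,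
      R.coroot_conj hg hα]
    congr 1
    show (g⁻¹ * g) β = β
    rw [inv_mul_cancel]; rfl
  exact_mod_cast h1

lemma pairing_self {γ : V} (hγ : γ ∈ R.Φ) : R.pairing γ γ = 2 := by
  have : (R.pairing γ γ : ℝ) = 2 := by rw [R.pairing_eq γ hγ γ hγ, R.coroot_self γ hγ]
  exact_mod_cast this

lemma pairing_neg_right {α β : V} (hα : α ∈ R.Φ) (hβ : β ∈ R.Φ) :
    R.pairing α (-β) = -R.pairing α β := by
  have : (R.pairing α (-β) : ℝ) = -(R.pairing α β : ℝ) := by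
    rw [R.pairing_eq α hα _ (R.neg_mem β hβ), R.pairing_eq α hα β hβ, map_neg]
  exact_mod_cast this

lemma coroot_s {γ α : V} (hγ : γ ∈ R.Φ) (hα : α ∈ R.Φ) (v : V) :
    R.coroot γ (R.s α v) = R.coroot γ v - R.coroot α v * R.coroot γ α := by
  rw [R.s_apply α hα v, map_sub, map_smul, smul_eq_mul]

lemma afpos_iff {c : V × ℤ} (hc : c.1 ∈ R.Φ) :
    R.AfPos c ↔ (if c.1 ∈ R.pos then (0:ℤ) else 1) ≤ c.2 := by
  unfold AfPos
  by_cases h : c.1 ∈ R.pos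
  · rw [if_pos h]
    constructor
    · rintro (⟨_, h2⟩ | ⟨_, h2⟩) <;> omega
    · exact fun h2 => Or.inl ⟨h, h2⟩
  · rw [if_neg h]
    have h1 : -c.1 ∈ R.pos := (R.mem_pos_or c.1 hc).resolve_left h
    constructor
    · rintro (⟨h3, _⟩ | ⟨_, h2⟩)
      · exact absurd h3 h
      · exact h2
    · exact fun h2 => Or.inr ⟨h1, h2⟩

lemma afpos_neg_iff {c : V × ℤ} (hc : c.1 ∈ R.Φ) : R.AfPos (-c) ↔ ¬ R.AfPos c := by
  rw [R.afpos_iff (by simpa using R.neg_mem _ hc), R.afpos_iff hc]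
  by_cases h : c.1 ∈ R.pos
  · have h2 : ¬ ((-c).1 ∈ R.pos) := by simpa using R.pos_not_neg _ h
    rw [if_pos h, if_neg h2]
    show 1 ≤ -c.2 ↔ ¬ (0 ≤ c.2)
    omega
  · have h1 : -c.1 ∈ R.pos := (R.mem_pos_or c.1 hc).resolve_left h
    rw [if_neg h, if_pos (show (-c).1 ∈ R.pos from h1)]
    show 0 ≤ -c.2 ↔ ¬ (1 ≤ c.2)
    omega

end RootSystemData

lemma amul_one_right (x : (V ≃ₗ[ℝ] V) × Module.Dual ℝ V) : amul x (1, 0) = x := by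
  unfold amul
  refine Prod.ext_iff.mpr ⟨mul_one _, ?_⟩
  show x.2 ∘ₗ (1 : V ≃ₗ[ℝ] V).toLinearMap + 0 = x.2
  rw [add_zero]
  apply LinearMap.ext; intro v; rfl

lemma amul_one_left (y : (V ≃ₗ[ℝ] V) × Module.Dual ℝ V) : amul (1, 0) y = y := by
  unfold amul
  refine Prod.ext_iff.mpr ⟨one_mul _, ?_⟩
  show (0 : Module.Dual ℝ V) ∘ₗ y.1.toLinearMap + y.2 = y.2
  rw [LinearMap.zero_comp, zero_add]

lemma amul_assoc (x y z : (V ≃ₗ[ℝ] V) × Module.Dual ℝ V) :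
    amul (amul x y) z = amul x (amul y z) := by
  unfold amul
  refine Prod.ext_iff.mpr ⟨mul_assoc _ _ _, ?_⟩
  show (x.2 ∘ₗ y.1.toLinearMap + y.2) ∘ₗ z.1.toLinearMap + z.2
      = x.2 ∘ₗ (y.1 * z.1).toLinearMap + (y.2 ∘ₗ z.1.toLinearMap + z.2)
  have h1 : (y.1 * z.1).toLinearMap = y.1.toLinearMap ∘ₗ z.1.toLinearMap := rfl
  rw [h1, LinearMap.add_comp, LinearMap.comp_assoc, add_assoc]

lemma aprod_cons (a : (V ≃ₗ[ℝ] V) × Module.Dual ℝ V) (l : List _) :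
    aprod (a :: l) = amul a (aprod l) := rfl

lemma aprod_concat (l : List ((V ≃ₗ[ℝ] V) × Module.Dual ℝ V)) (x) :
    aprod (l ++ [x]) = amul (aprod l) x := by
  induction l with
  | nil =>
    show amul x (aprod []) = amul (aprod []) x
    show amul x (1, 0) = amul (1, 0) x
    rw [amul_one_right, amul_one_left]
  | cons a t ih =>
    show amul a (aprod (t ++ [x])) = amul (amul a (aprod t)) x
    rw [ih, amul_assoc]

lemma aprod_fst (l : List ((V ≃ₗ[ℝ] V) × Module.Dual ℝ V)) :
    (aprod l).1 = (l.map Prod.fst).prod := by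
  induction l with
  | nil => rfl
  | cons a t ih =>
    show (amul a (aprod t)).1 = _
    rw [List.map_cons, List.prod_cons, ← ih]; rfl

lemma filter_le_of_sorted {K : ℕ} (h : Fin K) : ∀ (l : List (Fin K)), l.Pairwise (· < ·) →
    h ∈ l → l.filter (fun j => h ≤ j) = h :: l.filter (fun j => h < j) := by
  intro l
  induction l with
  | nil => intro _ hm; simp at hm
  | cons a t ih =>
    intro hp hm
    have hpa := List.pairwise_cons.mp hp
    rcases List.mem_cons.mp hm with rfl | hmt
    · have hfil : t.filter (fun j => h ≤ j) = t.filter (fun j => h < j) :=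
        List.filter_congr (fun x hx => by
          have hax : h < x := hpa.1 x hx
          simp [le_of_lt hax, hax])
      simp [List.filter_cons, hfil]
    · have hax : a < h := hpa.1 h hmt
      have h1 : ¬ (h ≤ a) := not_le.mpr hax
      have h2 : ¬ (h < a) := lt_asymm hax
      simp [List.filter_cons, h1, h2, ih hpa.2 hmt]

lemma finRange_filter_le {K : ℕ} (h : Fin K) : (List.finRange K).filter (fun j => h ≤ j)
    = h :: (List.finRange K).filter (fun j => h < j) :=
  filter_le_of_sorted h _ (List.pairwise_lt_finRange K) (List.mem_finRange h)

lemma finRange_filter_lt_last (K : ℕ) :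
    (List.finRange (K+1)).filter (fun j => Fin.last K < j) = [] := by
  apply List.filter_eq_nil_iff.mpr
  intro a _
  simpa using not_lt.mpr (Fin.le_last a)

lemma finRange_succ_concat (K : ℕ) :
    List.finRange (K+1) = ((List.finRange K).map Fin.castSucc) ++ [Fin.last K] := by
  have h1 : List.finRange (K+1) = List.ofFn (id : Fin (K+1) → Fin (K+1)) :=
    (List.ofFn_id _).symm
  rw [h1, List.ofFn_succ', List.concat_eq_append]
  congr 1
  rw [List.ofFn_eq_map]
  simp

namespace RootSystemData

variable (R : RootSystemData V)

lemma afRefl_self {b : V × ℤ} (hb : b.1 ∈ R.Φ) : R.afRefl b b = -b := by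
  unfold afRefl
  rw [R.pairing_self hb, R.s_self hb]
  refine Prod.ext_iff.mpr ⟨rfl, ?_⟩
  show b.2 - b.2 * 2 = -b.2
  ring

lemma afRefl_fst_mem {b c : V × ℤ} (hb : b.1 ∈ R.Φ) (hc : c.1 ∈ R.Φ) :
    (R.afRefl b c).1 ∈ R.Φ := R.s_root_mem _ hb _ hc

lemma afRefl_neg {b c : V × ℤ} (hb : b.1 ∈ R.Φ) (hc : c.1 ∈ R.Φ) :
    R.afRefl b (-c) = -(R.afRefl b c) := by
  unfold afRefl
  have h1 : (-c).1 = -c.1 := rfl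
  have h2 : (-c).2 = -c.2 := rfl
  rw [h1, h2, map_neg, R.pairing_neg_right hb hc]
  refine Prod.ext_iff.mpr ⟨rfl, ?_⟩
  show -c.2 - b.2 * -R.pairing b.1 c.1 = -(c.2 - b.2 * R.pairing b.1 c.1)
  ring

lemma twist_last {K : ℕ} (b : Fin (K+1) → V × ℤ) (hb : (b (Fin.last K)).1 ∈ R.Φ) :
    R.twist b (Fin.last K) = -(b (Fin.last K)) := by
  unfold twist
  rw [finRange_filter_le, finRange_filter_lt_last]
  simp only [List.foldl_cons, List.foldl_nil]
  exact R.afRefl_self hb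

lemma twistStrict_last {K : ℕ} (b : Fin (K+1) → V × ℤ) :
    R.twistStrict b (Fin.last K) = b (Fin.last K) := by
  unfold twistStrict
  rw [finRange_filter_lt_last]
  rfl

lemma twist_castSucc {K : ℕ} (b : Fin (K+1) → V × ℤ) (h : Fin K) :
    R.twist b h.castSucc = R.afRefl (b (Fin.last K)) (R.twist (fun j => b j.castSucc) h) := by
  unfold twist
  rw [finRange_succ_concat, List.filter_append, List.filter_map]
  have h1 : (List.finRange K).filter ((fun j => decide (h.castSucc ≤ j)) ∘ Fin.castSucc)
      = (List.finRange K).filter (fun j => h ≤ j) :=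
    List.filter_congr (fun x _ => by simp [Fin.castSucc_le_castSucc_iff])
  have h2 : ([Fin.last K].filter (fun j => h.castSucc ≤ j)) = [Fin.last K] := by
    simp [(Fin.le_last h.castSucc)]
  rw [h1, h2, List.foldl_append, List.foldl_map]
  simp only [List.foldl_cons, List.foldl_nil]

lemma twistStrict_castSucc {K : ℕ} (b : Fin (K+1) → V × ℤ) (h : Fin K) :
    R.twistStrict b h.castSucc
      = R.afRefl (b (Fin.last K)) (R.twistStrict (fun j => b j.castSucc) h) := by
  unfold twistStrict
  rw [finRange_succ_concat, List.filter_append, List.filter_map]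
  have h1 : (List.finRange K).filter ((fun j => decide (h.castSucc < j)) ∘ Fin.castSucc)
      = (List.finRange K).filter (fun j => h < j) :=
    List.filter_congr (fun x _ => by simp [Fin.castSucc_lt_castSucc_iff])
  have h2 : ([Fin.last K].filter (fun j => h.castSucc < j)) = [Fin.last K] := by
    simp [Fin.castSucc_lt_last h]
  rw [h1, h2, List.foldl_append, List.foldl_map]
  simp only [List.foldl_cons, List.foldl_nil]

lemma twistStrict_fst_mem : ∀ {K : ℕ} (b : Fin K → V × ℤ), (∀ j, (b j).1 ∈ R.Φ) →
    ∀ h, (R.twistStrict b h).1 ∈ R.Φ := by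
  intro K
  induction K with
  | zero => intro b _ h; exact h.elim0
  | succ K ih =>
    intro b hb h
    induction h using Fin.lastCases with
    | last => rw [R.twistStrict_last]; exact hb _
    | cast i =>
      rw [R.twistStrict_castSucc]
      exact R.afRefl_fst_mem (hb _) (ih _ (fun j => hb _) i)

lemma twist_fst_mem : ∀ {K : ℕ} (b : Fin K → V × ℤ), (∀ j, (b j).1 ∈ R.Φ) →
    ∀ h, (R.twist b h).1 ∈ R.Φ := by
  intro K
  induction K with
  | zero => intro b _ h; exact h.elim0
  | succ K ih =>
    intro b hb h
    induction h using Fin.lastCases with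
    | last =>
      rw [R.twist_last b (hb _)]
      simpa using R.neg_mem _ (hb _)
    | cast i =>
      rw [R.twist_castSucc]
      exact R.afRefl_fst_mem (hb _) (ih _ (fun j => hb _) i)

lemma twist_eq_neg_twistStrict : ∀ {K : ℕ} (b : Fin K → V × ℤ), (∀ j, (b j).1 ∈ R.Φ) →
    ∀ h, R.twist b h = -(R.twistStrict b h) := by
  intro K
  induction K with
  | zero => intro b _ h; exact h.elim0
  | succ K ih =>
    intro b hb h
    induction h using Fin.lastCases with
    | last => rw [R.twist_last b (hb _), R.twistStrict_last]
    | cast i =>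
      rw [R.twist_castSucc, R.twistStrict_castSucc, ih _ (fun j => hb _) i,
        R.afRefl_neg (hb _) (R.twistStrict_fst_mem _ (fun j => hb _) i)]

def sprodB {K : ℕ} (b : Fin K → V × ℤ) : V ≃ₗ[ℝ] V :=
  (List.ofFn fun j => R.s ((b j).1)).prod

lemma sprodB_zero (b : Fin 0 → V × ℤ) : R.sprodB b = 1 := by
  unfold sprodB; rw [List.ofFn_zero, List.prod_nil]

lemma sprodB_succ {K : ℕ} (b : Fin (K+1) → V × ℤ) :
    R.sprodB b = R.sprodB (fun j => b j.castSucc) * R.s ((b (Fin.last K)).1) := by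
  unfold sprodB
  rw [List.ofFn_succ', List.concat_eq_append, List.prod_append, List.prod_singleton]

lemma aprod_rE_fst {K : ℕ} (b : Fin K → V × ℤ) :
    (aprod (List.ofFn fun j => R.rE (b j))).1 = R.sprodB b := by
  rw [aprod_fst, List.map_ofFn]
  rfl

lemma aprod_rE_succ {K : ℕ} (b : Fin (K+1) → V × ℤ) :
    aprod (List.ofFn fun j => R.rE (b j))
      = amul (aprod (List.ofFn fun j => R.rE (b j.castSucc))) (R.rE (b (Fin.last K))) := by
  rw [List.ofFn_succ', List.concat_eq_append, aprod_concat]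

lemma mulinv_apply (e f : V ≃ₗ[ℝ] V) (v : V) : (e * f)⁻¹ v = f⁻¹ (e⁻¹ v) := by
  rw [mul_inv_rev]; rfl

lemma inv_app (e : V ≃ₗ[ℝ] V) (v : V) : e⁻¹ (e v) = v := by
  show (e⁻¹ * e) v = v
  rw [inv_mul_cancel]; rfl

lemma s_inv_app {α : V} (hα : α ∈ R.Φ) (v : V) : (R.s α)⁻¹ v = R.s α v := by
  rw [R.s_inv hα]

lemma twist_fst_eq : ∀ {K : ℕ} (b : Fin K → V × ℤ), (∀ j, (b j).1 ∈ R.Φ) → ∀ h : Fin K,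
    (R.twist b h).1
      = (R.sprodB b)⁻¹ (((List.ofFn fun j => R.s ((b j).1)).take (h : ℕ)).prod ((b h).1)) := by
  intro K
  induction K with
  | zero => intro b _ h; exact h.elim0
  | succ K ih =>
    intro b hb h
    have hlist : (List.ofFn fun j : Fin (K+1) => R.s ((b j).1))
        = (List.ofFn fun j : Fin K => R.s ((b j.castSucc).1)) ++ [R.s ((b (Fin.last K)).1)] := by
      rw [List.ofFn_succ', List.concat_eq_append]
    have hlen : (List.ofFn fun j : Fin K => R.s ((b j.castSucc).1)).length = K :=
      List.length_ofFn
    induction h using Fin.lastCases with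
    | last =>
      rw [R.twist_last b (hb _), hlist, Fin.val_last,
        List.take_append_of_le_length hlen.ge,
        List.take_of_length_le (le_of_eq hlen), R.sprodB_succ, mulinv_apply]
      show -(b (Fin.last K)).1 = _
      have e0 : (List.ofFn fun j : Fin K => R.s ((b j.castSucc).1)).prod
          = R.sprodB (fun j => b j.castSucc) := rfl
      rw [e0, inv_app, R.s_inv_app (hb _), R.s_self (hb _)]
    | cast i =>
      rw [R.twist_castSucc, hlist, Fin.coe_castSucc,
        List.take_append_of_le_length (by rw [hlen]; exact le_of_lt i.isLt),
        R.sprodB_succ, mulinv_apply]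
      have h1 : (R.afRefl (b (Fin.last K)) (R.twist (fun j => b j.castSucc) i)).1
          = R.s ((b (Fin.last K)).1) ((R.twist (fun j => b j.castSucc) i).1) := rfl
      rw [h1, ih _ (fun j => hb _) i, R.s_inv_app (hb _)]

lemma coroot_sprod_inv : ∀ {K : ℕ} (b : Fin K → V × ℤ), (∀ j, (b j).1 ∈ R.Φ) →
    ∀ {γ : V}, γ ∈ R.Φ → ∀ v : V,
    R.coroot γ ((R.sprodB b)⁻¹ v)
      = R.coroot γ v + ∑ h, (R.pairing γ ((R.twist b h).1) : ℝ) * R.coroot ((b h).1) v := by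
  intro K
  induction K with
  | zero =>
    intro b _ γ hγ v
    rw [R.sprodB_zero, inv_one]
    simp
  | succ K ih =>
    intro b hb γ hγ v
    set b' : Fin K → V × ℤ := fun j => b j.castSucc with hb'def
    have hb' : ∀ j, (b' j).1 ∈ R.Φ := fun j => hb _
    set γK := (b (Fin.last K)).1 with hγKdef
    have hγK : γK ∈ R.Φ := hb _
    have hδmem : ∀ i : Fin K, (R.twist b' i).1 ∈ R.Φ := fun i => R.twist_fst_mem b' hb' i
    rw [R.sprodB_succ, mulinv_apply, R.s_inv_app hγK,
      R.coroot_s hγ hγK ((R.sprodB b')⁻¹ v), ih b' hb' hγ v, ih b' hb' hγK v]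
    rw [Fin.sum_univ_castSucc]
    have hlastterm : (R.pairing γ ((R.twist b (Fin.last K)).1) : ℝ)
        * R.coroot ((b (Fin.last K)).1) v = -(R.pairing γ γK : ℝ) * R.coroot γK v := by
      rw [R.twist_last b hγK]
      have : (-(b (Fin.last K))).1 = -γK := rfl
      rw [this, R.pairing_neg_right hγ hγK]
      push_cast
      ring
    have hterm : ∀ i : Fin K, (R.pairing γ ((R.twist b i.castSucc).1) : ℝ)
        * R.coroot ((b i.castSucc).1) v
        = (R.pairing γ ((R.twist b' i).1) : ℝ) * R.coroot ((b' i).1) v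
          - (R.pairing γK ((R.twist b' i).1) : ℝ) * R.coroot ((b' i).1) v
            * R.coroot γ γK := by
      intro i
      rw [R.twist_castSucc]
      have h1 : (R.afRefl (b (Fin.last K)) (R.twist b' i)).1
          = R.s γK ((R.twist b' i).1) := rfl
      rw [h1]
      have h2 : (R.pairing γ (R.s γK ((R.twist b' i).1)) : ℝ)
          = (R.pairing γ ((R.twist b' i).1) : ℝ)
            - (R.pairing γK ((R.twist b' i).1) : ℝ) * R.coroot γ γK := by
        rw [R.pairing_eq γ hγ _ (R.s_root_mem γK hγK _ (hδmem i)),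
          R.coroot_s hγ hγK, R.pairing_eq γ hγ _ (hδmem i),
          R.pairing_eq γK hγK _ (hδmem i)]
      rw [h2]
      ring
    rw [Finset.sum_congr rfl (fun i _ => hterm i), hlastterm]
    rw [Finset.sum_sub_distrib]
    have h3 : (R.pairing γ γK : ℝ) = R.coroot γ γK := R.pairing_eq γ hγ γK hγK
    rw [h3, ← Finset.sum_mul]
    ring

lemma tpart_eq : ∀ {K : ℕ} (b : Fin K → V × ℤ), (∀ j, (b j).1 ∈ R.Φ) → ∀ v : V,
    (aprod (List.ofFn fun j => R.rE (b j))).2 ((R.sprodB b)⁻¹ v)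
      = ∑ h, ((R.twist b h).2 : ℝ) * R.coroot ((b h).1) v := by
  intro K
  induction K with
  | zero =>
    intro b _ v
    rw [List.ofFn_zero]
    simp [aprod]
  | succ K ih =>
    intro b hb v
    set b' : Fin K → V × ℤ := fun j => b j.castSucc with hb'def
    have hb' : ∀ j, (b' j).1 ∈ R.Φ := fun j => hb _
    set γK := (b (Fin.last K)).1 with hγKdef
    have hγK : γK ∈ R.Φ := hb _
    set νK := (b (Fin.last K)).2 with hνKdef
    rw [R.aprod_rE_succ, R.sprodB_succ, mulinv_apply, R.s_inv_app hγK]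
    have hsnd : (amul (aprod (List.ofFn fun j => R.rE (b j.castSucc))) (R.rE (b (Fin.last K)))).2
        = (aprod (List.ofFn fun j => R.rE (b' j))).2 ∘ₗ (R.s γK).toLinearMap
          + (νK : ℝ) • R.coroot γK := rfl
    rw [hsnd]
    simp only [LinearMap.add_apply, LinearMap.coe_comp, Function.comp_apply,
      LinearEquiv.coe_coe, LinearMap.smul_apply, smul_eq_mul]
    rw [show (R.s γK) (R.s γK ((R.sprodB b')⁻¹ v)) = (R.sprodB b')⁻¹ v from R.s_s hγK _]
    rw [ih b' hb' v]
    have hcs : R.coroot γK (R.s γK ((R.sprodB b')⁻¹ v)) = -R.coroot γK ((R.sprodB b')⁻¹ v) := by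
      rw [R.coroot_s hγK hγK, R.coroot_self γK hγK]
      ring
    rw [hcs, R.coroot_sprod_inv b' hb' hγK v]
    rw [Fin.sum_univ_castSucc]
    have hlastterm : ((R.twist b (Fin.last K)).2 : ℝ) * R.coroot ((b (Fin.last K)).1) v
        = -(νK : ℝ) * R.coroot γK v := by
      rw [R.twist_last b hγK]
      have : (-(b (Fin.last K))).2 = -νK := rfl
      rw [this]
      push_cast
      ring
    have hterm : ∀ i : Fin K, ((R.twist b i.castSucc).2 : ℝ) * R.coroot ((b i.castSucc).1) v
        = ((R.twist b' i).2 : ℝ) * R.coroot ((b' i).1) v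
          - (νK : ℝ) * ((R.pairing γK ((R.twist b' i).1) : ℝ) * R.coroot ((b' i).1) v) := by
      intro i
      rw [R.twist_castSucc]
      have h1 : (R.afRefl (b (Fin.last K)) (R.twist b' i)).2
          = (R.twist b' i).2 - νK * R.pairing γK ((R.twist b' i).1) := rfl
      rw [h1]
      push_cast
      ring
    rw [Finset.sum_congr rfl (fun i _ => hterm i), hlastterm]
    rw [Finset.sum_sub_distrib, ← Finset.mul_sum]
    ring

lemma app_inv (e : V ≃ₗ[ℝ] V) (v : V) : e (e⁻¹ v) = v := by
  show (e * e⁻¹) v = v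
  rw [mul_inv_cancel]; rfl

lemma conj_list {g : V ≃ₗ[ℝ] V} (hg : g ∈ R.Wgrp) :
    ∀ (l : List V), (∀ a ∈ l, a ∈ R.Φ) →
    (l.map fun a => R.s (g a)).prod = g * (l.map R.s).prod * g⁻¹ := by
  intro l
  induction l with
  | nil => intro _; simp
  | cons a t ih =>
    intro hl
    rw [List.map_cons, List.prod_cons, List.map_cons, List.prod_cons,
      ih (fun x hx => hl x (List.mem_cons_of_mem a hx)), R.s_conj hg (hl a List.mem_cons_self)]
    group

lemma conj_take {K : ℕ} (f : Fin K → V) (hf : ∀ j, f j ∈ R.Φ) {g : V ≃ₗ[ℝ] V}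
    (hg : g ∈ R.Wgrp) (k : ℕ) :
    ((List.ofFn fun j => R.s (g (f j))).take k).prod
      = g * ((List.ofFn fun j => R.s (f j)).take k).prod * g⁻¹ := by
  have e1 : (List.ofFn fun j => R.s (g (f j))).take k
      = (((List.finRange K).take k).map f).map (fun a => R.s (g a)) := by
    rw [List.ofFn_eq_map, ← List.map_take, List.map_map]; rfl
  have e2 : (List.ofFn fun j => R.s (f j)).take k
      = (((List.finRange K).take k).map f).map R.s := by
    rw [List.ofFn_eq_map, ← List.map_take, List.map_map]; rfl
  rw [e1, e2]
  apply R.conj_list hg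
  intro a ha
  obtain ⟨j, _, rfl⟩ := List.mem_map.mp ha
  exact hf j

lemma conj_ofFn {K : ℕ} (f : Fin K → V) (hf : ∀ j, f j ∈ R.Φ) {g : V ≃ₗ[ℝ] V}
    (hg : g ∈ R.Wgrp) :
    (List.ofFn fun j => R.s (g (f j))).prod
      = g * (List.ofFn fun j => R.s (f j)).prod * g⁻¹ := by
  have h := R.conj_take f hf hg K
  rw [List.take_of_length_le (le_of_eq List.length_ofFn),
    List.take_of_length_le (le_of_eq List.length_ofFn)] at h
  exact h

lemma twist_fst_congr {K : ℕ} (b b' : Fin K → V × ℤ) (hb : ∀ j, (b j).1 ∈ R.Φ)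
    (hbb : ∀ j, (b j).1 = (b' j).1) (h : Fin K) : (R.twist b h).1 = (R.twist b' h).1 := by
  have hb' : ∀ j, (b' j).1 ∈ R.Φ := fun j => hbb j ▸ hb j
  have hfun : (fun j => R.s ((b j).1)) = (fun j => R.s ((b' j).1)) :=
    funext fun j => by rw [hbb j]
  rw [R.twist_fst_eq b hb h, R.twist_fst_eq b' hb' h]
  unfold sprodB
  rw [hfun, hbb h]

lemma twist_cast' {K K' : ℕ} (hKK : K = K') (γf : Fin K' → V) (νf : Fin K' → ℤ) (h : Fin K) :
    R.twist (fun j => (γf (Fin.cast hKK j), νf (Fin.cast hKK j))) h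
      = R.twist (fun j => (γf j, νf j)) (Fin.cast hKK h) := by
  subst hKK; rfl

lemma exists_nu : ∀ {K : ℕ} (γf : Fin K → V), (∀ j, γf j ∈ R.Φ) → ∀ (m : Fin K → ℤ),
    ∃ ν : Fin K → ℤ, ∀ h, (R.twist (fun j => (γf j, ν j)) h).2 = m h := by
  intro K
  induction K with
  | zero => intro γf _ m; exact ⟨fun _ => 0, fun h => h.elim0⟩
  | succ K ih =>
    intro γf hγ m
    obtain ⟨ν'', hν''⟩ := ih (fun j => γf j.castSucc) (fun j => hγ _)
      (fun i => m i.castSucc + (-m (Fin.last K)) * R.pairing (γf (Fin.last K))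
        ((R.twist (fun j => (γf j.castSucc, (0:ℤ))) i).1))
    refine ⟨Fin.lastCases (-m (Fin.last K)) ν'', ?_⟩
    intro h
    induction h using Fin.lastCases with
    | last =>
      rw [R.twist_last _ (hγ _)]
      simp
    | cast i =>
      rw [R.twist_castSucc]
      simp only [Fin.lastCases_castSucc, Fin.lastCases_last]
      have h2 : (R.twist (fun j => (γf j.castSucc, ν'' j)) i).2
          - (-m (Fin.last K)) * R.pairing (γf (Fin.last K))
            ((R.twist (fun j => (γf j.castSucc, ν'' j)) i).1) = m i.castSucc := by
        rw [hν'' i, R.twist_fst_congr (fun j => (γf j.castSucc, ν'' j))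
          (fun j => (γf j.castSucc, (0:ℤ))) (fun j => hγ _) (fun j => rfl) i]
        ring
      exact h2

lemma nu_inj : ∀ {K : ℕ} (γf : Fin K → V), (∀ j, γf j ∈ R.Φ) → ∀ (ν ν' : Fin K → ℤ),
    (∀ h, (R.twist (fun j => (γf j, ν j)) h).2 = (R.twist (fun j => (γf j, ν' j)) h).2) →
    ν = ν' := by
  intro K
  induction K with
  | zero => intro γf _ ν ν' _; funext h; exact h.elim0
  | succ K ih =>
    intro γf hγ ν ν' hts
    have hlast : ν (Fin.last K) = ν' (Fin.last K) := by
      have h := hts (Fin.last K)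
      rw [R.twist_last _ (hγ _), R.twist_last _ (hγ _)] at h
      have h' : -ν (Fin.last K) = -ν' (Fin.last K) := h
      omega
    have htail : (fun j : Fin K => ν j.castSucc) = (fun j => ν' j.castSucc) := by
      apply ih (fun j => γf j.castSucc) (fun j => hγ _)
      intro i
      have h := hts i.castSucc
      rw [R.twist_castSucc, R.twist_castSucc] at h
      have hfst : (R.twist (fun j : Fin K => (γf j.castSucc, ν j.castSucc)) i).1
          = (R.twist (fun j : Fin K => (γf j.castSucc, ν' j.castSucc)) i).1 :=
        R.twist_fst_congr (fun j => (γf j.castSucc, ν j.castSucc))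
          (fun j => (γf j.castSucc, ν' j.castSucc)) (fun j => hγ _) (fun j => rfl) i
      have h2 : (R.twist (fun j : Fin K => (γf j.castSucc, ν j.castSucc)) i).2
          - ν (Fin.last K) * R.pairing (γf (Fin.last K))
            ((R.twist (fun j : Fin K => (γf j.castSucc, ν j.castSucc)) i).1)
          = (R.twist (fun j : Fin K => (γf j.castSucc, ν' j.castSucc)) i).2
          - ν' (Fin.last K) * R.pairing (γf (Fin.last K))
            ((R.twist (fun j : Fin K => (γf j.castSucc, ν' j.castSucc)) i).1) := h
      rw [← hfst, hlast] at h2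
      omega
    funext h
    induction h using Fin.lastCases with
    | last => exact hlast
    | cast i => exact congrFun htail i

end RootSystemData

lemma partialProd_castSucc' {M : Type*} [Monoid M] {K : ℕ} (f : Fin K → M) (i : Fin K) :
    Fin.partialProd f i.castSucc = ((List.ofFn f).take (i : ℕ)).prod := rfl

lemma partialProd_last' {M : Type*} [Monoid M] {K : ℕ} (f : Fin K → M) :
    Fin.partialProd f (Fin.last K) = (List.ofFn f).prod := by
  show ((List.ofFn f).take ((Fin.last K) : ℕ)).prod = _
  rw [Fin.val_last, List.take_of_length_le (le_of_eq (List.length_ofFn (f := f)))]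

lemma IncPath.vert_eq' {R : RootSystemData V} {N : ℕ} {lab : Fin N → V} {S : Set (Fin N)}
    {u v : V ≃ₗ[ℝ] V} (p : IncPath R lab S u v) (i : Fin (p.len + 1)) :
    p.vert i = u * Fin.partialProd (fun j => R.s (lab (p.ix j))) i := by
  induction i using Fin.induction with
  | zero => rw [p.vert_zero, Fin.partialProd_zero, mul_one]
  | succ i ih => rw [p.step i, ih, Fin.partialProd_succ, mul_assoc]

lemma IncPath.ix_eq {R : RootSystemData V} {N : ℕ} {lab : Fin N → V} {S : Set (Fin N)}
    {u v : V ≃ₗ[ℝ] V} {p q : IncPath R lab S u v} (hpq : p = q) (hl : p.len = q.len) :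
    ∀ i, p.ix i = q.ix (Fin.cast hl i) := by
  subst hpq; intro i; rfl

lemma IncPath.m_eq {R : RootSystemData V} {N : ℕ} {lab : Fin N → V} {S : Set (Fin N)}
    {u v : V ≃ₗ[ℝ] V} {p q : IncPath R lab S u v} (hpq : p = q) (hl : p.len = q.len) :
    ∀ i, p.m i = q.m (Fin.cast hl i) := by
  subst hpq; intro i; rfl

lemma IncPath.ext' {R : RootSystemData V} {N : ℕ} {lab : Fin N → V} {S : Set (Fin N)}
    {u v : V ≃ₗ[ℝ] V} {p q : IncPath R lab S u v} (hl : p.len = q.len)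
    (hix : ∀ i, p.ix i = q.ix (Fin.cast hl i)) (hm : ∀ i, p.m i = q.m (Fin.cast hl i))
    (hv : ∀ i, p.vert i = q.vert (Fin.cast (by rw [hl]) i)) : p = q := by
  obtain ⟨l1, ix1, mo1, mS1, m1, vt1, vz1, vl1, lm1, st1, mlb1⟩ := p
  obtain ⟨l2, ix2, mo2, mS2, m2, vt2, vz2, vl2, lm2, st2, mlb2⟩ := q
  dsimp at hl hix hm hv
  subst hl
  have h1 : ix1 = ix2 := funext fun i => hix i
  have h2 : m1 = m2 := funext fun i => hm i
  have h3 : vt1 = vt2 := funext fun i => hv i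
  subst h1; subst h2; subst h3
  rfl

lemma AdmissibleType.ext' {R : RootSystemData V} {N : ℕ} {RO : ReflectionOrder R N} {n : ℕ}
    {u : V ≃ₗ[ℝ] V} {x : (V ≃ₗ[ℝ] V) × Module.Dual ℝ V}
    {a₁ a₂ : AdmissibleType R RO n u x} (hK : a₁.K = a₂.K)
    (hidx : ∀ i, a₁.idx i = a₂.idx (Fin.cast hK i))
    (hν : ∀ i, a₁.ν i = a₂.ν (Fin.cast hK i)) : a₁ = a₂ := by
  obtain ⟨K1, idx1, mo1, bd1, nu1, ng1, pr1⟩ := a₁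
  obtain ⟨K2, idx2, mo2, bd2, nu2, ng2, pr2⟩ := a₂
  dsimp at hK hidx hν
  subst hK
  have h1 : idx1 = idx2 := funext fun i => hidx i
  have h2 : nu1 = nu2 := funext fun i => hν i
  subst h1; subst h2
  rfl


/-- the admissible types for `x = w t^μ` (bounded by `n`) are in bijection with
the ≺-increasing paths bounded by `n` from `w⁻¹u` to `u` of weight `u⁻¹ w μ`; the bijection
sends the type `((n₁,ν₁),…,(n_K,ν_K))` to the increasing path with edge labels
`β_{n₁}, …, β_{n_K}`, the edge labelled `β_{n_h}` carrying the integer `m'_h`, where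
`(β'_h, m'_h) = r_{b_K} ⋯ r_{b_h}(b_h)` and `b_h = (u β_{n_h}, ν_h)`. -/
theorem statement4 (R : RootSystemData V) {N : ℕ} (RO : ReflectionOrder R N)
    (Λ : AddSubgroup (Module.Dual ℝ V))
    (hΛcoroot : ∀ α ∈ R.Φ, R.coroot α ∈ Λ)
    (hΛstable : ∀ g ∈ R.Wgrp, ∀ μ ∈ Λ, μ ∘ₗ (g : V ≃ₗ[ℝ] V).toLinearMap ∈ Λ)
    (w : V ≃ₗ[ℝ] V) (hw : w ∈ R.Wgrp) (μ : Module.Dual ℝ V) (hμ : μ ∈ Λ)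
    (u : V ≃ₗ[ℝ] V) (hu : u ∈ R.Wgrp) (n : ℕ) (hn : n ≤ N) :
    ∃ e : AdmissibleType R RO n u (w, μ) ≃
        {p : IncPath R RO.β {j : Fin N | (j : ℕ) < n} (w⁻¹ * u) u //
          IncPath.wt p = μ ∘ₗ ((w⁻¹ * u : V ≃ₗ[ℝ] V)).toLinearMap},
      ∀ a : AdmissibleType R RO n u (w, μ),
        ∃ h : (e a).val.len = a.K,
          (∀ i, (e a).val.ix i = a.idx (Fin.cast h i)) ∧
          (∀ i, (e a).val.m i =
            (R.twist (fun j => (u (RO.β (a.idx j)), a.ν j)) (Fin.cast h i)).2) := by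
  classical
  have hβpos : ∀ j : Fin N, RO.β j ∈ R.pos := fun j => by
    have h : RO.β j ∈ Set.range RO.β := Set.mem_range_self j
    rw [RO.range_eq] at h
    exact h
  have hβΦ : ∀ j : Fin N, RO.β j ∈ R.Φ := fun j => R.pos_subset (hβpos j)
  have huβ : ∀ j : Fin N, u (RO.β j) ∈ R.Φ := fun j => R.w_maps hu (hβΦ j)
  have hsprodW : ∀ (K : ℕ) (idx : Fin K → Fin N) (ν : Fin K → ℤ),
      R.sprodB (fun j => (u (RO.β (idx j)), ν j))
        = u * (List.ofFn fun j => R.s (RO.β (idx j))).prod * u⁻¹ := by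
    intro K idx ν
    exact R.conj_ofFn (fun j => RO.β (idx j)) (fun j => hβΦ _) hu
  have hfstgen : ∀ (K : ℕ) (idx : Fin K → Fin N) (ν : Fin K → ℤ),
      R.sprodB (fun j => (u (RO.β (idx j)), ν j)) = w → ∀ i : Fin K,
      (R.twist (fun j => (u (RO.β (idx j)), ν j)) i).1
        = ((w⁻¹ * u) * Fin.partialProd (fun j => R.s (RO.β (idx j))) i.castSucc)
            (RO.β (idx i)) := by
    intro K idx ν hW i
    have e1 : (R.twist (fun j => (u (RO.β (idx j)), ν j)) i).1
        = (R.sprodB (fun j => (u (RO.β (idx j)), ν j)))⁻¹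
          (((List.ofFn fun j => R.s (u (RO.β (idx j)))).take (i : ℕ)).prod
            (u (RO.β (idx i)))) :=
      R.twist_fst_eq (fun j => (u (RO.β (idx j)), ν j)) (fun j => huβ _) i
    rw [hW] at e1
    have hct := R.conj_take (fun j => RO.β (idx j)) (fun j => hβΦ _) hu (i : ℕ)
    rw [e1, hct]
    show w⁻¹ (u ((((List.ofFn fun j => R.s (RO.β (idx j))).take (i : ℕ)).prod)
      (u⁻¹ (u (RO.β (idx i)))))) = _
    rw [RootSystemData.inv_app]
    rfl
  let F : AdmissibleType R RO n u (w, μ) →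
      {p : IncPath R RO.β {j : Fin N | (j : ℕ) < n} (w⁻¹ * u) u //
        IncPath.wt p = μ ∘ₗ ((w⁻¹ * u : V ≃ₗ[ℝ] V)).toLinearMap} := fun a => by
    have hW : R.sprodB (fun j => (u (RO.β (a.idx j)), a.ν j)) = w := by
      have h := congrArg Prod.fst a.prod_eq
      rw [R.aprod_rE_fst] at h
      exact h
    refine ⟨{ len := a.K
              ix := a.idx
              mono := a.mono
              mem_S := a.bounded
              m := fun i => (R.twist (fun j => (u (RO.β (a.idx j)), a.ν j)) i).2
              vert := fun i =>
                (w⁻¹ * u) * Fin.partialProd (fun j => R.s (RO.β (a.idx j))) i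
              vert_zero := by
                show (w⁻¹ * u) * Fin.partialProd (fun j => R.s (RO.β (a.idx j))) 0 = w⁻¹ * u
                rw [Fin.partialProd_zero, mul_one]
              vert_last := ?_
              lab_mem := fun i => hβpos _
              step := fun i => by
                show (w⁻¹ * u) * Fin.partialProd (fun j => R.s (RO.β (a.idx j))) i.succ
                  = (w⁻¹ * u) * Fin.partialProd (fun j => R.s (RO.β (a.idx j))) i.castSucc
                    * R.s (RO.β (a.idx i))
                rw [Fin.partialProd_succ, ← mul_assoc]
              m_lb := ?_ }, ?_⟩
    · -- vert_last
      show (w⁻¹ * u) * Fin.partialProd (fun j => R.s (RO.β (a.idx j))) (Fin.last a.K) = u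
      rw [partialProd_last']
      have h2 := hsprodW a.K a.idx a.ν
      rw [hW] at h2
      have h3 : (List.ofFn fun j => R.s (RO.β (a.idx j))).prod = u⁻¹ * w * u := by
        calc (List.ofFn fun j => R.s (RO.β (a.idx j))).prod
            = u⁻¹ * (u * (List.ofFn fun j => R.s (RO.β (a.idx j))).prod * u⁻¹) * u := by group
          _ = u⁻¹ * w * u := by rw [← h2]
      rw [h3]; group
    · -- m_lb
      intro i
      have hAf : R.AfPos (R.twist (fun j => (u (RO.β (a.idx j)), a.ν j)) i) := by
        rw [R.twist_eq_neg_twistStrict _ (fun j => huβ _) i]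
        exact (R.afpos_neg_iff (R.twistStrict_fst_mem _ (fun j => huβ _) i)).mpr
          (a.neg_cond i)
      have h1 := (R.afpos_iff (R.twist_fst_mem _ (fun j => huβ _) i)).mp hAf
      rw [hfstgen a.K a.idx a.ν hW i] at h1
      exact h1
    · -- wt
      apply LinearMap.ext
      intro v
      have hμ2 : (aprod (List.ofFn fun j => R.rE (u (RO.β (a.idx j)), a.ν j))).2 = μ :=
        congrArg Prod.snd a.prod_eq
      have hkey : μ (w⁻¹ (u v)) = ∑ h : Fin a.K,
          ((R.twist (fun j => (u (RO.β (a.idx j)), a.ν j)) h).2 : ℝ)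
            * R.coroot (u (RO.β (a.idx h))) (u v) := by
        have h0 : (aprod (List.ofFn fun j => R.rE (u (RO.β (a.idx j)), a.ν j))).2
            ((R.sprodB (fun j => (u (RO.β (a.idx j)), a.ν j)))⁻¹ (u v))
            = ∑ h : Fin a.K, ((R.twist (fun j => (u (RO.β (a.idx j)), a.ν j)) h).2 : ℝ)
              * R.coroot (u (RO.β (a.idx h))) (u v) :=
          R.tpart_eq (fun j => (u (RO.β (a.idx j)), a.ν j)) (fun j => huβ _) (u v)
        rw [hW, hμ2] at h0
        exact h0
      show (∑ i : Fin a.K, ((R.twist (fun j => (u (RO.β (a.idx j)), a.ν j)) i).2 : ℝ)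
          • R.coroot (RO.β (a.idx i))) v = μ ((w⁻¹ * u) v)
      rw [LinearMap.sum_apply]
      simp only [LinearMap.smul_apply, smul_eq_mul]
      have hc : ∀ h : Fin a.K,
          R.coroot (u (RO.β (a.idx h))) (u v) = R.coroot (RO.β (a.idx h)) v :=
        fun h => by rw [R.coroot_conj hu (hβΦ _), RootSystemData.inv_app]
      rw [show μ ((w⁻¹ * u) v) = μ (w⁻¹ (u v)) from rfl, hkey]
      exact Finset.sum_congr rfl (fun h _ => by rw [hc h])
  refine ⟨Equiv.ofBijective F ⟨?_, ?_⟩, fun a => ⟨rfl, fun i => rfl, fun i => rfl⟩⟩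
  · -- injective
    intro a₁ a₂ hF
    have hval : (F a₁).val = (F a₂).val := congrArg Subtype.val hF
    have hK : a₁.K = a₂.K := congrArg IncPath.len hval
    have hidx' : ∀ i : Fin a₁.K, a₁.idx i = a₂.idx (Fin.cast hK i) := IncPath.ix_eq hval hK
    have hm' : ∀ i : Fin a₁.K, (R.twist (fun j => (u (RO.β (a₁.idx j)), a₁.ν j)) i).2
        = (R.twist (fun j => (u (RO.β (a₂.idx j)), a₂.ν j)) (Fin.cast hK i)).2 :=
      IncPath.m_eq hval hK
    have hfun : (fun j : Fin a₁.K => (u (RO.β (a₁.idx j)), a₂.ν (Fin.cast hK j)))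
        = (fun j => (u (RO.β (a₂.idx (Fin.cast hK j))), a₂.ν (Fin.cast hK j))) :=
      funext fun j => by rw [hidx' j]
    have hνfun : a₁.ν = fun j => a₂.ν (Fin.cast hK j) := by
      apply R.nu_inj (fun j => u (RO.β (a₁.idx j))) (fun j => huβ _)
      intro h
      have e1 : R.twist (fun j : Fin a₁.K => (u (RO.β (a₁.idx j)), a₂.ν (Fin.cast hK j))) h
          = R.twist (fun j : Fin a₂.K => (u (RO.β (a₂.idx j)), a₂.ν j)) (Fin.cast hK h) := by
        rw [hfun]
        exact R.twist_cast' hK (fun j => u (RO.β (a₂.idx j))) a₂.ν h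
      rw [e1]
      exact hm' h
    exact AdmissibleType.ext' hK hidx' (fun i => congrFun hνfun i)
  · -- surjective
    rintro ⟨p, hwt⟩
    obtain ⟨ν, hν⟩ := R.exists_nu (fun j => u (RO.β (p.ix j))) (fun j => huβ _) p.m
    have hb : ∀ j, ((fun j => (u (RO.β (p.ix j)), ν j)) j).1 ∈ R.Φ := fun j => huβ _
    have hvert : ∀ i, p.vert i
        = (w⁻¹ * u) * Fin.partialProd (fun j => R.s (RO.β (p.ix j))) i :=
      fun i => p.vert_eq' i
    have hPfull : (List.ofFn fun j => R.s (RO.β (p.ix j))).prod = u⁻¹ * w * u := by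
      have h := (hvert (Fin.last p.len)).symm.trans p.vert_last
      rw [partialProd_last'] at h
      have h2 : (w⁻¹ * u)⁻¹ * ((w⁻¹ * u) * (List.ofFn fun j => R.s (RO.β (p.ix j))).prod)
          = (w⁻¹ * u)⁻¹ * u := by rw [h]
      rw [← mul_assoc, inv_mul_cancel, one_mul] at h2
      rw [h2]; group
    have hW : R.sprodB (fun j => (u (RO.β (p.ix j)), ν j)) = w := by
      have h := hsprodW p.len p.ix ν
      rw [hPfull] at h
      rw [h]; group
    have hprod : aprod (List.ofFn fun h => R.rE (u (RO.β (p.ix h)), ν h)) = (w, μ) := by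
      have h1 : (aprod (List.ofFn fun h => R.rE (u (RO.β (p.ix h)), ν h))).1 = w := by
        have h0 : (aprod (List.ofFn fun h => R.rE (u (RO.β (p.ix h)), ν h))).1
            = R.sprodB (fun j => (u (RO.β (p.ix j)), ν j)) :=
          R.aprod_rE_fst (fun j => (u (RO.β (p.ix j)), ν j))
        rw [hW] at h0
        exact h0
      have h2 : (aprod (List.ofFn fun h => R.rE (u (RO.β (p.ix h)), ν h))).2 = μ := by
        apply LinearMap.ext
        intro x
        have h0 : (aprod (List.ofFn fun h => R.rE (u (RO.β (p.ix h)), ν h))).2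
            ((R.sprodB (fun j => (u (RO.β (p.ix j)), ν j)))⁻¹ (w x))
            = ∑ h : Fin p.len, ((R.twist (fun j => (u (RO.β (p.ix j)), ν j)) h).2 : ℝ)
              * R.coroot (u (RO.β (p.ix h))) (w x) :=
          R.tpart_eq (fun j => (u (RO.β (p.ix j)), ν j)) hb (w x)
        rw [hW, RootSystemData.inv_app] at h0
        have hterm : ∀ h : Fin p.len,
            ((R.twist (fun j => (u (RO.β (p.ix j)), ν j)) h).2 : ℝ)
              * R.coroot (u (RO.β (p.ix h))) (w x)
            = (p.m h : ℝ) * R.coroot (RO.β (p.ix h)) (u⁻¹ (w x)) := fun h => by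
          rw [hν h, R.coroot_conj hu (hβΦ _)]
        rw [Finset.sum_congr rfl (fun h _ => hterm h)] at h0
        have h3 := LinearMap.congr_fun hwt (u⁻¹ (w x))
        have h4 : IncPath.wt p (u⁻¹ (w x))
            = ∑ h : Fin p.len, (p.m h : ℝ) * R.coroot (RO.β (p.ix h)) (u⁻¹ (w x)) := by
          rw [IncPath.wt, LinearMap.sum_apply]
          exact Finset.sum_congr rfl (fun h _ => by rw [LinearMap.smul_apply, smul_eq_mul])
        have h5 : (μ ∘ₗ ((w⁻¹ * u : V ≃ₗ[ℝ] V)).toLinearMap) (u⁻¹ (w x)) = μ x := by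
          show μ ((w⁻¹ * u) (u⁻¹ (w x))) = μ x
          rw [show (w⁻¹ * u) (u⁻¹ (w x)) = w⁻¹ (u (u⁻¹ (w x))) from rfl, RootSystemData.app_inv, RootSystemData.inv_app]
        rw [h0, ← h4, h3, h5]
      exact Prod.ext_iff.mpr ⟨h1, h2⟩
    have hneg : ∀ h : Fin p.len,
        ¬ R.AfPos (R.twistStrict (fun j => (u (RO.β (p.ix j)), ν j)) h) := by
      intro h
      have hAf : R.AfPos (R.twist (fun j => (u (RO.β (p.ix j)), ν j)) h) := by
        rw [R.afpos_iff (R.twist_fst_mem _ hb h)]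
        rw [hfstgen p.len p.ix ν hW h, hν h, ← hvert h.castSucc]
        exact p.m_lb h
      rw [R.twist_eq_neg_twistStrict _ hb h] at hAf
      exact (R.afpos_neg_iff (R.twistStrict_fst_mem _ hb h)).mp hAf
    refine ⟨⟨p.len, p.ix, p.mono, p.mem_S, ν, hneg, hprod⟩, ?_⟩
    apply Subtype.ext
    refine IncPath.ext' rfl (fun i => rfl) (fun i => hν i) (fun i => (hvert i).symm)


end
end
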